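/- Noninterference: if M is a well-formed term of ℓΛ∞^{4S}, M reduces at depth 0 to N, and M ⤳ L, then there exists P such that N ⤳ P and L reduces at depth 0 to P. -/

import Mathlib

namespace LLInf

/-- Node labels of preterms of the linear infinitary λ-calculus ℓΛ∞. -/
inductive Shape where
  | var (x : ℕ)
  | app
  | labs (x : ℕ)
  | iabs (x : ℕ)
  | cabs (x : ℕ)
  | ibox
  | cbox
deriving DecidableEq

/-- Preterms: possibly infinite trees, encoded by their (partial) position function. -/
def T : Type := List ℕ → Option Shape

def mk0 (s : Shape) : T := fun p => if p = [] then some s else none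

def mk1 (s : Shape) (M : T) : T := fun p =>
  match p with
  | [] => some s
  | 0 :: q => M q
  | _ => none

def mk2 (M N : T) : T := fun p =>
  match p with
  | [] => some Shape.app
  | 0 :: q => M q
  | 1 :: q => N q
  | _ => none

def child (M : T) (i : ℕ) : T := fun p => M (i :: p)

def bindsX (x : ℕ) : Option Shape → Bool
  | some (Shape.labs y) => y == x
  | some (Shape.iabs y) => y == x
  | some (Shape.cabs y) => y == x
  | _ => false

/-- Capture-avoiding (shadowing-respecting) substitution on positional preterms. -/
def substF (x : ℕ) (N : T) : T → List ℕ → Option Shape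
  | M, [] => if M [] = some (Shape.var x) then N [] else M []
  | M, i :: q =>
      if M [] = some (Shape.var x) then N (i :: q)
      else if bindsX x (M []) then M (i :: q)
      else substF x N (child M i) q
termination_by M p => p.length

def subst (x : ℕ) (N M : T) : T := fun p => substF x N M p

def FreeAt (x : ℕ) : T → List ℕ → Prop
  | M, [] => M [] = some (Shape.var x)
  | M, i :: q => bindsX x (M []) = false ∧ FreeAt x (child M i) q
termination_by M p => p.length

/-- `x` occurs free in `M`. -/
def Free (x : ℕ) (M : T) : Prop := ∃ p, FreeAt x M p

def arity : Shape → ℕ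
  | Shape.var _ => 0
  | Shape.app => 2
  | _ => 1

/-- The position function is a coherent (constructor-generated) tree. -/
def IsPre (M : T) : Prop :=
  (∃ s, M [] = some s) ∧
  (∀ p t, M p = some t → ∀ i, (∃ s, M (p ++ [i]) = some s) ↔ i < arity t) ∧
  (∀ p q, M p = none → M (p ++ q) = none)

/-- Basic reduction of ℓΛ∞. -/
inductive Basic : T → T → Prop
  | lin (x : ℕ) (M N : T) :
      Basic (mk2 (mk1 (Shape.labs x) M) N) (subst x N M)
  | ind (x : ℕ) (M N : T) :
      Basic (mk2 (mk1 (Shape.iabs x) M) (mk1 Shape.ibox N)) (subst x N M)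
  | coi (x : ℕ) (M N : T) :
      Basic (mk2 (mk1 (Shape.cabs x) M) (mk1 Shape.cbox N)) (subst x N M)

/-- One-step reduction, indexed by the level: the list of boxes crossed,
`false` for an inductive box, `true` for a coinductive box. -/
inductive Red : List Bool → T → T → Prop
  | base {M N} : Basic M N → Red [] M N
  | appL {s M N} (P) : Red s M N → Red s (mk2 M P) (mk2 N P)
  | appR {s M N} (P) : Red s M N → Red s (mk2 P M) (mk2 P N)
  | labs {s M N} (x) : Red s M N → Red s (mk1 (Shape.labs x) M) (mk1 (Shape.labs x) N)
  | iabs {s M N} (x) : Red s M N → Red s (mk1 (Shape.iabs x) M) (mk1 (Shape.iabs x) N)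
  | cabs {s M N} (x) : Red s M N → Red s (mk1 (Shape.cabs x) M) (mk1 (Shape.cabs x) N)
  | ibox {s M N} : Red s M N → Red (false :: s) (mk1 Shape.ibox M) (mk1 Shape.ibox N)
  | cbox {s M N} : Red s M N → Red (true :: s) (mk1 Shape.cbox M) (mk1 Shape.cbox N)

def Red' (M N : T) : Prop := ∃ s, Red s M N

/-- Reduction at depth `n`: at a level crossing exactly `n` coinductive boxes. -/
def RedAt (n : ℕ) (M N : T) : Prop := ∃ s, s.count true = n ∧ Red s M N

def Star : T → T → Prop := Relation.ReflTransGen Red'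

/-! ### Environments and well-formation for ℓΛ∞ -/

inductive Pat where
  | lin | ind | coi
deriving DecidableEq

def Env : Type := ℕ → Option Pat

def Env.upd (Γ : Env) (x : ℕ) (p : Option Pat) : Env :=
  fun y => if y = x then p else Γ y

def Env.union (Γ Δ : Env) : Env := fun y => (Γ y).orElse (fun _ => Δ y)

def NoLin (Γ : Env) : Prop := ∀ y, Γ y ≠ some Pat.lin

def OnlyLinAt (Γ : Env) (x : ℕ) : Prop :=
  Γ x = some Pat.lin ∧ ∀ y, y ≠ x → Γ y ≠ some Pat.lin

/-- Splitting of an environment: nonlinear entries are shared, linear ones split. -/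
def Split (Γ Γ₁ Γ₂ : Env) : Prop := ∀ y,
  (Γ₁ y = Γ y ∧ Γ₂ y = Γ y ∧ Γ y ≠ some Pat.lin) ∨
  (Γ y = some Pat.lin ∧
    ((Γ₁ y = some Pat.lin ∧ Γ₂ y = none) ∨ (Γ₂ y = some Pat.lin ∧ Γ₁ y = none)))

/-- The inductive rules of the mixed formal system of ℓΛ∞, with `R` the
judgments provided by the coinductive layer. -/
inductive WFStep (R : Env → T → Prop) : Env → T → Prop
  | base {Γ M} : R Γ M → WFStep R Γ M
  | vl {Γ} (x) : OnlyLinAt Γ x → WFStep R Γ (mk0 (Shape.var x))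
  | vi {Γ} (x) : NoLin Γ → Γ x = some Pat.ind → WFStep R Γ (mk0 (Shape.var x))
  | vc {Γ} (x) : NoLin Γ → Γ x = some Pat.coi → WFStep R Γ (mk0 (Shape.var x))
  | app {Γ Γ₁ Γ₂ M N} : Split Γ Γ₁ Γ₂ → WFStep R Γ₁ M → WFStep R Γ₂ N →
      WFStep R Γ (mk2 M N)
  | ll {Γ x M} : Γ x = none → WFStep R (Γ.upd x (some Pat.lin)) M →
      WFStep R Γ (mk1 (Shape.labs x) M)
  | li {Γ x M} : Γ x = none → WFStep R (Γ.upd x (some Pat.ind)) M →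
      WFStep R Γ (mk1 (Shape.iabs x) M)
  | lc {Γ x M} : Γ x = none → WFStep R (Γ.upd x (some Pat.coi)) M →
      WFStep R Γ (mk1 (Shape.cabs x) M)
  | mi {Γ M} : NoLin Γ → WFStep R Γ M → WFStep R Γ (mk1 Shape.ibox M)

/-- One application of the unique coinductive rule (mc). -/
def CoStep (S : Env → T → Prop) (Γ : Env) (M : T) : Prop :=
  NoLin Γ ∧ ∃ N, M = mk1 Shape.cbox N ∧ S Γ N

/-- Well-formation in ℓΛ∞: greatest fixed point of Ind ∘ Coind, presented via
consistent sets. -/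
def WF (Γ : Env) (M : T) : Prop :=
  ∃ S : Env → T → Prop, (∀ Δ N, S Δ N → WFStep (CoStep S) Δ N) ∧ S Γ M

/-! ### Infinitary reduction ⇒ and its auxiliary relation ⤳ -/

/-- One application of the coinductive ⇒-rule. `true` marks ⇒-judgments,
`false` marks ⤳-judgments. -/
def IRCo (S : Bool → T → T → Prop) (b : Bool) (M L : T) : Prop :=
  b = true ∧ ∃ N, Star M N ∧ S false N L

/-- The inductive ⤳-rules. -/
inductive IRInd (R : Bool → T → T → Prop) : Bool → T → T → Prop
  | base {b M N} : R b M N → IRInd R b M N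
  | varr (x) : IRInd R false (mk0 (Shape.var x)) (mk0 (Shape.var x))
  | app {M N P Q} : IRInd R false M N → IRInd R false P Q →
      IRInd R false (mk2 M P) (mk2 N Q)
  | labs {M N} (x) : IRInd R false M N →
      IRInd R false (mk1 (Shape.labs x) M) (mk1 (Shape.labs x) N)
  | iabs {M N} (x) : IRInd R false M N →
      IRInd R false (mk1 (Shape.iabs x) M) (mk1 (Shape.iabs x) N)
  | cabs {M N} (x) : IRInd R false M N →
      IRInd R false (mk1 (Shape.cabs x) M) (mk1 (Shape.cabs x) N)
  | ibox {M N} : IRInd R false M N →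
      IRInd R false (mk1 Shape.ibox M) (mk1 Shape.ibox N)
  | cbox {M N} : IRInd R true M N →
      IRInd R false (mk1 Shape.cbox M) (mk1 Shape.cbox N)

def IRSys (b : Bool) (M N : T) : Prop :=
  ∃ S : Bool → T → T → Prop,
    (∀ b' M' N', S b' M' N' → IRInd (IRCo S) b' M' N') ∧ S b M N

/-- Infinitary reduction M ⇒ N. -/
def Inf (M N : T) : Prop := IRSys true M N

/-- Auxiliary relation M ⤳ N. -/
def Next (M N : T) : Prop := IRSys false M N

def NormalForm (N : T) : Prop := ∀ s P, ¬ Red s N P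

end LLInf
namespace LLInf

/-! ### The infinitary λ-calculus Λ_{00a} and its Girard-style embedding -/

/-- Inductive rules for membership in Λ_{00a}: when `a = true` the argument
premise goes through the coinductive guard `S`. -/
inductive LamStep (a : Bool) (S : T → Prop) : T → Prop
  | var (x) : LamStep a S (mk0 (Shape.var x))
  | app0 {M N} : a = false → LamStep a S M → LamStep a S N → LamStep a S (mk2 M N)
  | app1 {M N} : a = true → LamStep a S M → S N → LamStep a S (mk2 M N)
  | lam {M} (x) : LamStep a S M → LamStep a S (mk1 (Shape.labs x) M)

/-- `M` is a term of Λ_{00a} (the depth increasing in argument position iff `a`). -/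
def Lam00 (a : Bool) (M : T) : Prop :=
  ∃ S : T → Prop, (∀ N, S N → LamStep a S N) ∧ S M

/-- The Girard-style embedding ⟨·⟩ₐ of Λ_{00a} into ℓΛ∞, positionally:
⟨x⟩ = x, ⟨MN⟩ = ⟨M⟩(◻ₐ⟨N⟩), ⟨λx.M⟩ = λ◻ₐx.⟨M⟩. -/
def embF (a : Bool) : T → List ℕ → Option Shape
  | M, [] =>
      match M [] with
      | some (Shape.var x) => some (Shape.var x)
      | some Shape.app => some Shape.app
      | some (Shape.labs x) => some (if a then Shape.cabs x else Shape.iabs x)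
      | _ => none
  | M, i :: q =>
      match M [] with
      | some Shape.app =>
          if i = 0 then embF a (child M 0) q
          else if i = 1 then
            match q with
            | [] => some (if a then Shape.cbox else Shape.ibox)
            | j :: r => if j = 0 then embF a (child M 1) r else none
          else none
      | some (Shape.labs _) => if i = 0 then embF a (child M 0) q else none
      | _ => none
termination_by M p => p.length
decreasing_by all_goals (simp [List.length_cons]; try omega)

def emb (a : Bool) (M : T) : T := fun p => embF a M p

/-- Reduction at depth `n` in Λ_{00a}: the depth increases only when entering
the second argument of an application, and only when `a = true`. -/
inductive LRed (a : Bool) : ℕ → T → T → Prop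
  | beta (x M N) : LRed a 0 (mk2 (mk1 (Shape.labs x) M) N) (subst x N M)
  | appL {n M N} (P) : LRed a n M N → LRed a n (mk2 M P) (mk2 N P)
  | lam {n M N} (x) : LRed a n M N →
      LRed a n (mk1 (Shape.labs x) M) (mk1 (Shape.labs x) N)
  | appR0 {n M N} (P) : a = false → LRed a n M N → LRed a n (mk2 P M) (mk2 P N)
  | appR1 {n M N} (P) : a = true → LRed a n M N → LRed a (n + 1) (mk2 P M) (mk2 P N)

/-- The environment ◻ₐ(FV(M)): every free variable of `M`, marked inductive
(a = false) or coinductive (a = true). -/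
noncomputable def envOf (a : Bool) (M : T) : Env := fun y =>
  @ite _ (Free y M) (Classical.dec _) (some (if a then Pat.coi else Pat.ind)) none

/-- The defining (guarded) equations of capture-avoiding substitution. -/
def SubstEqs (f : ℕ → T → T → T) : Prop :=
  ∀ x (N : T),
    f x N (mk0 (Shape.var x)) = N ∧
    (∀ y, y ≠ x → f x N (mk0 (Shape.var y)) = mk0 (Shape.var y)) ∧
    (∀ M P, f x N (mk2 M P) = mk2 (f x N M) (f x N P)) ∧
    (∀ y M, y ≠ x → f x N (mk1 (Shape.labs y) M) = mk1 (Shape.labs y) (f x N M)) ∧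
    (∀ M, f x N (mk1 (Shape.labs x) M) = mk1 (Shape.labs x) M) ∧
    (∀ y M, y ≠ x → f x N (mk1 (Shape.iabs y) M) = mk1 (Shape.iabs y) (f x N M)) ∧
    (∀ M, f x N (mk1 (Shape.iabs x) M) = mk1 (Shape.iabs x) M) ∧
    (∀ y M, y ≠ x → f x N (mk1 (Shape.cabs y) M) = mk1 (Shape.cabs y) (f x N M)) ∧
    (∀ M, f x N (mk1 (Shape.cabs x) M) = mk1 (Shape.cabs x) M) ∧
    (∀ M, f x N (mk1 Shape.ibox M) = mk1 Shape.ibox (f x N M)) ∧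
    (∀ M, f x N (mk1 Shape.cbox M) = mk1 Shape.cbox (f x N M))

end LLInf
namespace LLInf

/-! ### The calculus ℓΛ∞^{4S} -/

/-- Patterns of ℓΛ∞^{4S}: x, ↓x, !x, ↑x, #x. -/
inductive Pat4 where
  | lin | dm | im | cm | am
deriving DecidableEq

def Env4 : Type := ℕ → Option Pat4

def Env4.upd (Γ : Env4) (x : ℕ) (p : Option Pat4) : Env4 :=
  fun y => if y = x then p else Γ y

/-- Patterns shared between the premises of applications: ↓, ↑, #. -/
def Shared4 (p : Option Pat4) : Prop :=
  p = some Pat4.dm ∨ p = some Pat4.cm ∨ p = some Pat4.am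

/-- Environment containing only ↓, ↑, # patterns. -/
def Passive4 (Γ : Env4) : Prop := ∀ y, Γ y = none ∨ Shared4 (Γ y)

def Split4 (Γ Γ₁ Γ₂ : Env4) : Prop := ∀ y,
  (Shared4 (Γ y) ∧ Γ₁ y = Γ y ∧ Γ₂ y = Γ y) ∨
  (Γ y = none ∧ Γ₁ y = none ∧ Γ₂ y = none) ∨
  ((Γ y = some Pat4.lin ∨ Γ y = some Pat4.im) ∧
    ((Γ₁ y = Γ y ∧ Γ₂ y = none) ∨ (Γ₂ y = Γ y ∧ Γ₁ y = none)))

/-- Environment transformation of the (mi) rule: conclusion ↓Θ,!Ξ,↑Ψ,#Φ ⊢ !M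
from premise Ξ,↑Ψ,#Φ ⊢ M. -/
def MiEnv (Γ Γ' : Env4) : Prop := ∀ y,
  (Γ y = some Pat4.im ∧ Γ' y = some Pat4.lin) ∨
  (Γ y = some Pat4.cm ∧ Γ' y = some Pat4.cm) ∨
  (Γ y = some Pat4.am ∧ Γ' y = some Pat4.am) ∨
  (Γ y = some Pat4.dm ∧ Γ' y = none) ∨
  (Γ y = none ∧ Γ' y = none)

/-- Environment transformation of the coinductive (mc) rule: conclusion
↓Θ,↑Ξ,#Ψ ⊢ §M from premise #Ξ,#Ψ ⊢ M. -/
def McEnv (Γ Γ' : Env4) : Prop := ∀ y,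
  (Γ y = some Pat4.cm ∧ Γ' y = some Pat4.am) ∨
  (Γ y = some Pat4.am ∧ Γ' y = some Pat4.am) ∨
  (Γ y = some Pat4.dm ∧ Γ' y = none) ∨
  (Γ y = none ∧ Γ' y = none)

/-- The inductive well-formation rules of ℓΛ∞^{4S}. -/
inductive WF4Step (R : Env4 → T → Prop) : Env4 → T → Prop
  | base {Γ M} : R Γ M → WF4Step R Γ M
  | vl {Γ} (x) : Γ x = some Pat4.lin → Passive4 (Γ.upd x none) →
      WF4Step R Γ (mk0 (Shape.var x))
  | vd {Γ} (x) : Γ x = some Pat4.dm → Passive4 Γ → WF4Step R Γ (mk0 (Shape.var x))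
  | va {Γ} (x) : Γ x = some Pat4.am → Passive4 Γ → WF4Step R Γ (mk0 (Shape.var x))
  | app {Γ Γ₁ Γ₂ M N} : Split4 Γ Γ₁ Γ₂ → WF4Step R Γ₁ M → WF4Step R Γ₂ N →
      WF4Step R Γ (mk2 M N)
  | ll {Γ x M} : Γ x = none → WF4Step R (Γ.upd x (some Pat4.lin)) M →
      WF4Step R Γ (mk1 (Shape.labs x) M)
  | li1 {Γ x M} : Γ x = none → WF4Step R (Γ.upd x (some Pat4.dm)) M →
      WF4Step R Γ (mk1 (Shape.iabs x) M)
  | li2 {Γ x M} : Γ x = none → WF4Step R (Γ.upd x (some Pat4.im)) M →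
      WF4Step R Γ (mk1 (Shape.iabs x) M)
  | lc {Γ x M} : Γ x = none → WF4Step R (Γ.upd x (some Pat4.cm)) M →
      WF4Step R Γ (mk1 (Shape.cabs x) M)
  | mi {Γ Γ' M} : MiEnv Γ Γ' → WF4Step R Γ' M → WF4Step R Γ (mk1 Shape.ibox M)

/-- One application of the coinductive rule (mc) of ℓΛ∞^{4S}. -/
def CoStep4 (S : Env4 → T → Prop) (Γ : Env4) (M : T) : Prop :=
  ∃ Γ' N, McEnv Γ Γ' ∧ M = mk1 Shape.cbox N ∧ S Γ' N

/-- Well-formation in ℓΛ∞^{4S}. -/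
def WF4 (Γ : Env4) (M : T) : Prop :=
  ∃ S : Env4 → T → Prop, (∀ Δ N, S Δ N → WF4Step (CoStep4 S) Δ N) ∧ S Γ M

/-! ### Sizes, free occurrences, duplicability factors and weights -/

/-- The defining equations of the size |M|ₘ at depth m, as a relation. -/
inductive SizeRel : T → ℕ → ℕ → Prop
  | var0 (x) : SizeRel (mk0 (Shape.var x)) 0 1
  | ibox0 {M n} : SizeRel M 0 n → SizeRel (mk1 Shape.ibox M) 0 (n + 1)
  | cbox0 (M) : SizeRel (mk1 Shape.cbox M) 0 0
  | app0 {M N n p} : SizeRel M 0 n → SizeRel N 0 p →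
      SizeRel (mk2 M N) 0 (n + p + 1)
  | labs0 {M n} (x) : SizeRel M 0 n → SizeRel (mk1 (Shape.labs x) M) 0 (n + 1)
  | iabs0 {M n} (x) : SizeRel M 0 n → SizeRel (mk1 (Shape.iabs x) M) 0 (n + 1)
  | cabs0 {M n} (x) : SizeRel M 0 n → SizeRel (mk1 (Shape.cabs x) M) 0 (n + 1)
  | varS (x m) : SizeRel (mk0 (Shape.var x)) (m + 1) 0
  | iboxS {M m n} : SizeRel M (m + 1) n → SizeRel (mk1 Shape.ibox M) (m + 1) n
  | cboxS {M m n} : SizeRel M m n → SizeRel (mk1 Shape.cbox M) (m + 1) n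
  | appS {M N m n p} : SizeRel M (m + 1) n → SizeRel N (m + 1) p →
      SizeRel (mk2 M N) (m + 1) (n + p)
  | labsS {M m n} (x) : SizeRel M (m + 1) n → SizeRel (mk1 (Shape.labs x) M) (m + 1) n
  | iabsS {M m n} (x) : SizeRel M (m + 1) n → SizeRel (mk1 (Shape.iabs x) M) (m + 1) n
  | cabsS {M m n} (x) : SizeRel M (m + 1) n → SizeRel (mk1 (Shape.cabs x) M) (m + 1) n

/-- Number of free occurrences of `x`, as a relation. -/
inductive NFO (x : ℕ) : T → ℕ → Prop
  | varEq : NFO x (mk0 (Shape.var x)) 1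
  | varNe {y} : y ≠ x → NFO x (mk0 (Shape.var y)) 0
  | app {M N n p} : NFO x M n → NFO x N p → NFO x (mk2 M N) (n + p)
  | labsSh (M) : NFO x (mk1 (Shape.labs x) M) 0
  | labs {y M n} : y ≠ x → NFO x M n → NFO x (mk1 (Shape.labs y) M) n
  | iabsSh (M) : NFO x (mk1 (Shape.iabs x) M) 0
  | iabs {y M n} : y ≠ x → NFO x M n → NFO x (mk1 (Shape.iabs y) M) n
  | cabsSh (M) : NFO x (mk1 (Shape.cabs x) M) 0
  | cabs {y M n} : y ≠ x → NFO x M n → NFO x (mk1 (Shape.cabs y) M) n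
  | ibox {M n} : NFO x M n → NFO x (mk1 Shape.ibox M) n
  | cbox {M n} : NFO x M n → NFO x (mk1 Shape.cbox M) n
  | cboxNot {M} : ¬ Free x M → NFO x (mk1 Shape.cbox M) 0

/-- The defining equations of the duplicability factor Dₘ(M), as a relation. -/
inductive DRel : T → ℕ → ℕ → Prop
  | var0 (x) : DRel (mk0 (Shape.var x)) 0 1
  | ibox0 {M d} : DRel M 0 d → DRel (mk1 Shape.ibox M) 0 d
  | cbox0 (M) : DRel (mk1 Shape.cbox M) 0 1
  | app0 {M N d e} : DRel M 0 d → DRel N 0 e → DRel (mk2 M N) 0 (max d e)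
  | labs0 {M d} (x) : DRel M 0 d → DRel (mk1 (Shape.labs x) M) 0 d
  | cabs0 {M d} (x) : DRel M 0 d → DRel (mk1 (Shape.cabs x) M) 0 d
  | iabs0 {x M k d} : NFO x M k → DRel M 0 d →
      DRel (mk1 (Shape.iabs x) M) 0 (max k d)
  | varS (x m) : DRel (mk0 (Shape.var x)) (m + 1) 1
  | iboxS {M m d} : DRel M (m + 1) d → DRel (mk1 Shape.ibox M) (m + 1) d
  | cboxS {M m d} : DRel M m d → DRel (mk1 Shape.cbox M) (m + 1) d
  | appS {M N m d e} : DRel M (m + 1) d → DRel N (m + 1) e →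
      DRel (mk2 M N) (m + 1) (max d e)
  | labsS {M m d} (x) : DRel M (m + 1) d → DRel (mk1 (Shape.labs x) M) (m + 1) d
  | iabsS {M m d} (x) : DRel M (m + 1) d → DRel (mk1 (Shape.iabs x) M) (m + 1) d
  | cabsS {M m d} (x) : DRel M (m + 1) d → DRel (mk1 (Shape.cabs x) M) (m + 1) d

/-- The defining equations of the n-weight wⁿₘ(M), as a relation. -/
inductive WRel (n : ℕ) : T → ℕ → ℕ → Prop
  | var0 (x) : WRel n (mk0 (Shape.var x)) 0 1
  | ibox0 {M w} : WRel n M 0 w → WRel n (mk1 Shape.ibox M) 0 (n * w)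
  | cbox0 (M) : WRel n (mk1 Shape.cbox M) 0 0
  | app0 {M N w v} : WRel n M 0 w → WRel n N 0 v → WRel n (mk2 M N) 0 (w + v)
  | labs0 {M w} (x) : WRel n M 0 w → WRel n (mk1 (Shape.labs x) M) 0 (w + 1)
  | iabs0 {M w} (x) : WRel n M 0 w → WRel n (mk1 (Shape.iabs x) M) 0 (w + 1)
  | cabs0 {M w} (x) : WRel n M 0 w → WRel n (mk1 (Shape.cabs x) M) 0 (w + 1)
  | varS (x m) : WRel n (mk0 (Shape.var x)) (m + 1) 0
  | iboxS {M m w} : WRel n M (m + 1) w → WRel n (mk1 Shape.ibox M) (m + 1) w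
  | cboxS {M m w} : WRel n M m w → WRel n (mk1 Shape.cbox M) (m + 1) w
  | appS {M N m w v} : WRel n M (m + 1) w → WRel n N (m + 1) v →
      WRel n (mk2 M N) (m + 1) (w + v)
  | labsS {M m w} (x) : WRel n M (m + 1) w → WRel n (mk1 (Shape.labs x) M) (m + 1) w
  | iabsS {M m w} (x) : WRel n M (m + 1) w → WRel n (mk1 (Shape.iabs x) M) (m + 1) w
  | cabsS {M m w} (x) : WRel n M (m + 1) w → WRel n (mk1 (Shape.cabs x) M) (m + 1) w

/-- Wₘ(M) = w^{Dₘ(M)}ₘ(M): the weight of `M` at depth `m`. -/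
def TW (M : T) (m w : ℕ) : Prop := ∃ d, DRel M m d ∧ WRel d M m w

end LLInf

namespace LLInf

/-! ### Basic toolkit -/

section Aux

lemma child_mk2_0 (M N : T) : child (mk2 M N) 0 = M := by
  funext q; rfl

lemma child_mk2_1 (M N : T) : child (mk2 M N) 1 = N := by
  funext q; rfl

lemma child_mk1_0 (s : Shape) (M : T) : child (mk1 s M) 0 = M := by
  funext q; rfl

lemma mk2_inj {M N M' N' : T} (h : mk2 M N = mk2 M' N') : M = M' ∧ N = N' := by
  constructor
  · funext q; exact congrFun h (0 :: q)
  · funext q; exact congrFun h (1 :: q)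

lemma mk1_inj {s s' : Shape} {M M' : T} (h : mk1 s M = mk1 s' M') :
    s = s' ∧ M = M' := by
  constructor
  · have := congrFun h ([] : List ℕ); simpa [mk1] using this
  · funext q; exact congrFun h (0 :: q)

lemma mk0_at (s : Shape) : mk0 s [] = some s := rfl
lemma mk1_at (s : Shape) (M : T) : mk1 s M [] = some s := rfl
lemma mk2_at (M N : T) : mk2 M N [] = some Shape.app := rfl

lemma ne_of_head {M N : T} (h : M [] ≠ N []) : M ≠ N := fun e => h (by rw [e])

lemma mk0_ne_mk1 {s s' : Shape} {M : T} : mk0 s ≠ mk1 s' M ∨ s = s' := by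
  by_cases h : s = s'
  · exact Or.inr h
  · exact Or.inl (ne_of_head (by simp [mk0, mk1, h]))

end Aux

/-! ### Substitution equations -/

section SubstEq

lemma substF_cons (x : ℕ) (N M : T) (i : ℕ) (q : List ℕ) :
    substF x N M (i :: q) = (if M [] = some (Shape.var x) then N (i :: q)
      else if bindsX x (M []) then M (i :: q) else substF x N (child M i) q) := by
  simp [substF]

lemma substF_nil (x : ℕ) (N M : T) :
    substF x N M [] = (if M [] = some (Shape.var x) then N [] else M []) := by
  simp [substF]

lemma subst_root_var {x : ℕ} {A C : T} (h : C [] = some (Shape.var x)) :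
    subst x A C = A := by
  funext p
  cases p with
  | nil => simp [subst, substF_nil, h]
  | cons i q => simp [subst, substF_cons, h]

/-- substitution stops at a binder of `x`. -/
lemma subst_stop {x : ℕ} {A C : T} (h : bindsX x (C []) = true) :
    subst x A C = C := by
  have hv : C [] ≠ some (Shape.var x) := by
    intro e; rw [e] at h; simp [bindsX] at h
  funext p
  cases p with
  | nil => simp [subst, substF_nil, hv]
  | cons i q => simp [subst, substF_cons, hv, h]

lemma subst_step {x : ℕ} {A C : T} (hv : C [] ≠ some (Shape.var x))
    (hb : bindsX x (C []) = false) (i : ℕ) :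
    child (subst x A C) i = subst x A (child C i) := by
  funext q
  simp [child, subst, substF_cons, hv, hb]

lemma subst_head {x : ℕ} {A C : T} (hv : C [] ≠ some (Shape.var x)) :
    (subst x A C) [] = C [] := by
  simp [subst, substF_nil, hv]

lemma subst_mk2 (x : ℕ) (A M N : T) :
    subst x A (mk2 M N) = mk2 (subst x A M) (subst x A N) := by
  have hv : (mk2 M N) [] ≠ some (Shape.var x) := by simp [mk2]
  have hb : bindsX x ((mk2 M N) []) = false := by simp [mk2, bindsX]
  funext p
  match p with
  | [] => simp [subst, substF_nil, hv]; rfl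
  | 0 :: q =>
      have := congrFun (subst_step (A := A) hv hb 0) q
      simpa [child, child_mk2_0, mk2] using this
  | 1 :: q =>
      have := congrFun (subst_step (A := A) hv hb 1) q
      simpa [child, child_mk2_1, mk2] using this
  | (i+2) :: q =>
      have := congrFun (subst_step (A := A) hv hb (i+2)) q
      simp only [child] at this
      rw [show (subst x A (mk2 M N)) ((i+2) :: q) = subst x A (child (mk2 M N) (i+2)) q from this]
      have hnone : child (mk2 M N) (i+2) = (fun _ => none : T) := by
        funext r; rfl
      rw [hnone]
      have : ∀ r, subst x A (fun _ => none : T) r = none := by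
        intro r
        induction r with
        | nil => simp [subst]; rw [substF_nil (M := (fun _ => none : T))]; simp
        | cons j r ih =>
            simp only [subst] at ih ⊢
            erw [substF_cons]
            simp [bindsX]; exact ih
      rw [this q]; rfl

lemma subst_none (x : ℕ) (A : T) :
    ∀ r, subst x A (fun _ => none : T) r = none := by
  intro r
  induction r with
  | nil => simp [subst]; rw [substF_nil (M := (fun _ => none : T))]; simp
  | cons j r ih =>
      simp only [subst] at ih ⊢
      erw [substF_cons]
      simp [bindsX]; exact ih

lemma subst_mk1 (x : ℕ) (A : T) {s : Shape} (M : T)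
    (hv : ∀ y, s ≠ Shape.var y) (hb : bindsX x (some s) = false) :
    subst x A (mk1 s M) = mk1 s (subst x A M) := by
  have hv' : (mk1 s M) [] ≠ some (Shape.var x) := by
    simp [mk1]; exact hv x
  funext p
  match p with
  | [] => simp [subst, substF_nil, hv']; rfl
  | 0 :: q =>
      have := congrFun (subst_step (A := A) hv' (by simpa [mk1] using hb) 0) q
      simpa [child, child_mk1_0, mk1] using this
  | (i+1) :: q =>
      have := congrFun (subst_step (A := A) hv' (by simpa [mk1] using hb) (i+1)) q
      simp only [child] at this
      rw [show (subst x A (mk1 s M)) ((i+1) :: q) = subst x A (child (mk1 s M) (i+1)) q from this]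
      have hnone : child (mk1 s M) (i+1) = (fun _ => none : T) := by
        funext r; rfl
      rw [hnone, subst_none]; rfl

lemma subst_var_eq (x : ℕ) (A : T) :
    subst x A (mk0 (Shape.var x)) = A :=
  subst_root_var rfl

lemma subst_var_ne {x z : ℕ} (A : T) (h : z ≠ x) :
    subst x A (mk0 (Shape.var z)) = mk0 (Shape.var z) := by
  have hv : (mk0 (Shape.var z)) [] ≠ some (Shape.var x) := by
    simp [mk0]; exact h
  funext p
  match p with
  | [] => simp [subst, substF_nil, hv]
  | i :: q =>
      have hb : bindsX x ((mk0 (Shape.var z)) []) = false := by simp [mk0, bindsX]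
      have := congrFun (subst_step (A := A) hv hb i) q
      simp only [child] at this
      rw [show (subst x A (mk0 (Shape.var z))) (i :: q) = subst x A (child (mk0 (Shape.var z)) i) q from this]
      have hnone : child (mk0 (Shape.var z)) i = (fun _ => none : T) := by
        funext r; simp [child, mk0]
      rw [hnone, subst_none]; rfl

end SubstEq

/-! ### Free occurrences, binders -/

section FreeNB

lemma freeAt_nil {x : ℕ} {M : T} : FreeAt x M [] ↔ M [] = some (Shape.var x) := by
  simp [FreeAt]

lemma freeAt_cons {x : ℕ} {M : T} {i : ℕ} {q : List ℕ} :
    FreeAt x M (i :: q) ↔ bindsX x (M []) = false ∧ FreeAt x (child M i) q := by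
  simp [FreeAt]

lemma freeAt_none {y : ℕ} : ∀ p : List ℕ, ¬ FreeAt y (fun _ => none : T) p := by
  intro p
  induction p with
  | nil => intro h; have := (freeAt_nil (M := (fun _ => none : T))).1 h; simp at this
  | cons i q ih =>
      erw [freeAt_cons]
      rintro ⟨-, h⟩
      exact ih h

/-- `M` contains no binder of `y`. -/
def NB (y : ℕ) (M : T) : Prop := ∀ p, bindsX y (M p) = false

/-- `x` has no free occurrence below a coinductive box of `M`. -/
def Pinv (x : ℕ) (M : T) : Prop :=
  ∀ p q, M p = some Shape.cbox → ¬ FreeAt x M (p ++ 0 :: q)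

lemma nb_child {y : ℕ} {M : T} (h : NB y M) (i : ℕ) : NB y (child M i) :=
  fun p => h (i :: p)

lemma pinv_child {x : ℕ} {M : T} (h : Pinv x M)
    (hb : bindsX x (M []) = false) (i : ℕ) : Pinv x (child M i) := by
  intro p q hc hf
  exact h (i :: p) q hc (by rw [List.cons_append, freeAt_cons]; exact ⟨hb, hf⟩)

lemma pinv_cbox {x : ℕ} {c : T} (h : Pinv x (mk1 Shape.cbox c)) : ¬ Free x c := by
  rintro ⟨q, hq⟩
  exact h [] q rfl (by
    rw [List.nil_append, freeAt_cons]
    exact ⟨by simp [mk1, bindsX], by rwa [child_mk1_0]⟩)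

lemma subst_id {x : ℕ} {A C : T} (h : ¬ Free x C) : subst x A C = C := by
  funext p
  induction p generalizing C with
  | nil =>
      have : C [] ≠ some (Shape.var x) := fun e => h ⟨[], freeAt_nil.2 e⟩
      simp [subst, substF_nil, this]
  | cons i q ih =>
      have hv : C [] ≠ some (Shape.var x) := fun e => h ⟨[], freeAt_nil.2 e⟩
      by_cases hb : bindsX x (C []) = true
      · simp [subst, substF_cons, hv, hb]
      · have hb' : bindsX x (C []) = false := by simpa using hb
        have hnc : ¬ Free x (child C i) := by
          rintro ⟨r, hr⟩
          exact h ⟨i :: r, freeAt_cons.2 ⟨hb', hr⟩⟩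
        have := ih (C := child C i) hnc
        simp only [subst] at this ⊢
        rw [substF_cons]
        simp [hv, hb', this, child]

lemma subst_shape {z : ℕ} {B C : T} {s : Shape} :
    ∀ p, (subst z B C) p = some s →
      (∃ q, C q = some s) ∨ (∃ q, B q = some s) := by
  intro p
  induction p generalizing C with
  | nil =>
      intro h
      rw [show (subst z B C) [] = _ from substF_nil z B C] at h
      split at h
      · exact Or.inr ⟨[], h⟩
      · exact Or.inl ⟨[], h⟩
  | cons i q ih =>
      intro h
      rw [show (subst z B C) (i :: q) = _ from substF_cons z B C i q] at h
      split at h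
      · exact Or.inr ⟨i :: q, h⟩
      · split at h
        · exact Or.inl ⟨i :: q, h⟩
        · rcases ih (C := child C i) h with ⟨q', hq⟩ | hB
          · exact Or.inl ⟨i :: q', hq⟩
          · exact Or.inr hB

lemma nb_subst {y z : ℕ} {B C : T} (hC : NB y C) (hB : NB y B) :
    NB y (subst z B C) := by
  intro p
  rcases h : (subst z B C) p with _ | s
  · rfl
  · rcases subst_shape p h with ⟨q, hq⟩ | ⟨q, hq⟩
    · have := hC q; rwa [hq] at this
    · have := hB q; rwa [hq] at this

lemma subst_free {y z : ℕ} {B C : T} :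
    ∀ p, FreeAt y (subst z B C) p → (y ≠ z ∧ Free y C) ∨ Free y B := by
  intro p
  induction p generalizing C with
  | nil =>
      intro h
      rw [freeAt_nil] at h
      rw [show (subst z B C) [] = _ from substF_nil z B C] at h
      split at h
      · exact Or.inr ⟨[], freeAt_nil.2 h⟩
      · rename_i hne
        refine Or.inl ⟨?_, ⟨[], freeAt_nil.2 h⟩⟩
        intro e; subst e; exact hne h
  | cons i q ih =>
      intro h
      rw [freeAt_cons] at h
      obtain ⟨hb, hf⟩ := h
      by_cases hv : C [] = some (Shape.var z)
      · rw [subst_root_var hv] at hb hf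
        exact Or.inr ⟨i :: q, freeAt_cons.2 ⟨hb, hf⟩⟩
      · by_cases hbz : bindsX z (C []) = true
        · rw [subst_stop hbz] at hb hf
          refine Or.inl ⟨?_, ⟨i :: q, freeAt_cons.2 ⟨hb, hf⟩⟩⟩
          intro e; subst e; rw [hb] at hbz; exact Bool.false_ne_true hbz
        · have hbz' : bindsX z (C []) = false := by simpa using hbz
          rw [subst_step hv hbz'] at hf
          have hbC : bindsX y (C []) = false := by
            rwa [subst_head hv] at hb
          rcases ih (C := child C i) hf with ⟨hne, ⟨r, hr⟩⟩ | hB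
          · exact Or.inl ⟨hne, ⟨i :: r, freeAt_cons.2 ⟨hbC, hr⟩⟩⟩
          · exact Or.inr hB

end FreeNB

/-! ### Substitution composition -/

section Comp

lemma subst_comp {x z : ℕ} {A B : T} (hxz : x ≠ z) (hzA : ¬ Free z A) :
    ∀ C, NB x C → subst x A (subst z B C) = subst z (subst x A B) (subst x A C) := by
  have hAz : A [] ≠ some (Shape.var z) := fun e => hzA ⟨[], freeAt_nil.2 e⟩
  suffices h : ∀ (p : List ℕ) (C : T), NB x C →
      (subst x A (subst z B C)) p = (subst z (subst x A B) (subst x A C)) p by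
    intro C hC; funext p; exact h p C hC
  intro p
  induction p with
  | nil =>
      intro C hC
      by_cases hz : C [] = some (Shape.var z)
      · have hvx : C [] ≠ some (Shape.var x) := by
          rw [hz]; intro e; simp at e; exact hxz e.symm
        rw [subst_root_var hz]
        have hE : (subst x A C) [] = some (Shape.var z) := by
          rw [subst_head hvx, hz]
        conv_rhs => rw [subst_root_var hE]
      · by_cases hx : C [] = some (Shape.var x)
        · rw [subst_root_var hx, subst_id hzA]
          have hD : (subst z B C) [] = some (Shape.var x) := by
            rw [subst_head hz, hx]
          rw [subst_root_var hD]
        · have hD : (subst z B C) [] = C [] := subst_head hz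
          have hE : (subst x A C) [] = C [] := subst_head hx
          rw [show (subst x A (subst z B C)) [] = _ from substF_nil _ _ _,
              show (subst z (subst x A B) (subst x A C)) [] = _ from substF_nil _ _ _]
          rw [hD, hE, if_neg hx, if_neg hz]
  | cons i q ih =>
      intro C hC
      have hbx : bindsX x (C []) = false := hC []
      by_cases hz : C [] = some (Shape.var z)
      · have hvx : C [] ≠ some (Shape.var x) := by
          rw [hz]; intro e; simp at e; exact hxz e.symm
        rw [subst_root_var hz]
        have hE : (subst x A C) [] = some (Shape.var z) := by
          rw [subst_head hvx, hz]
        conv_rhs => rw [subst_root_var hE]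
      · by_cases hx : C [] = some (Shape.var x)
        · rw [subst_root_var hx, subst_id hzA]
          have hD : (subst z B C) [] = some (Shape.var x) := by
            rw [subst_head hz, hx]
          rw [subst_root_var hD]
        · by_cases hbz : bindsX z (C []) = true
          · have hbz' : bindsX z ((subst x A C) []) = true := by
              rwa [subst_head hx]
            rw [subst_stop hbz, subst_stop hbz']
          · have hbz' : bindsX z (C []) = false := by simpa using hbz
            have hD : (subst z B C) [] = C [] := subst_head hz
            have hE : (subst x A C) [] = C [] := subst_head hx
            have hDx : (subst z B C) [] ≠ some (Shape.var x) := by rw [hD]; exact hx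
            have hDbx : bindsX x ((subst z B C) []) = false := by rw [hD]; exact hbx
            have hEz : (subst x A C) [] ≠ some (Shape.var z) := by rw [hE]; exact hz
            have hEbz : bindsX z ((subst x A C) []) = false := by rw [hE]; exact hbz'
            have l1 : (subst x A (subst z B C)) (i :: q)
                = (subst x A (child (subst z B C) i)) q := by
              have := congrFun (subst_step (A := A) hDx hDbx i) q
              simpa [child] using this
            have l2 : (subst z (subst x A B) (subst x A C)) (i :: q)
                = (subst z (subst x A B) (child (subst x A C) i)) q := by
              have := congrFun (subst_step (A := subst x A B) hEz hEbz i) q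
              simpa [child] using this
            rw [l1, l2, subst_step hz hbz', subst_step hx hbx]
            exact ih (child C i) (nb_child hC i)

end Comp

/-! ### Reduction vs free variables, binders, substitution -/

section RedFacts

lemma nb_mk2 {y : ℕ} {M N : T} (hM : NB y M) (hN : NB y N) : NB y (mk2 M N) := by
  intro p
  match p with
  | [] => simp [mk2, bindsX]
  | 0 :: q => exact hM q
  | 1 :: q => exact hN q
  | (i+2) :: q => simp [mk2, bindsX]

lemma nb_mk1 {y : ℕ} {s : Shape} {M : T} (hs : bindsX y (some s) = false)
    (hM : NB y M) : NB y (mk1 s M) := by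
  intro p
  match p with
  | [] => exact hs
  | 0 :: q => exact hM q
  | (i+1) :: q => simp [mk1, bindsX]

lemma nb_mk2_left {y : ℕ} {M N : T} (h : NB y (mk2 M N)) : NB y M :=
  fun p => h (0 :: p)

lemma nb_mk2_right {y : ℕ} {M N : T} (h : NB y (mk2 M N)) : NB y N :=
  fun p => h (1 :: p)

lemma nb_mk1_body {y : ℕ} {s : Shape} {M : T} (h : NB y (mk1 s M)) : NB y M :=
  fun p => h (0 :: p)

lemma free_mk2 {y : ℕ} {M N : T} : Free y (mk2 M N) ↔ Free y M ∨ Free y N := by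
  constructor
  · rintro ⟨p, hp⟩
    match p with
    | [] => rw [freeAt_nil] at hp; simp [mk2] at hp
    | 0 :: q =>
        rw [freeAt_cons] at hp
        exact Or.inl ⟨q, by rw [child_mk2_0] at hp; exact hp.2⟩
    | 1 :: q =>
        rw [freeAt_cons] at hp
        exact Or.inr ⟨q, by rw [child_mk2_1] at hp; exact hp.2⟩
    | (i+2) :: q =>
        rw [freeAt_cons] at hp
        exact absurd hp.2 (by
          have : child (mk2 M N) (i+2) = (fun _ => none : T) := by funext r; rfl
          rw [this]; exact freeAt_none q)
  · rintro (⟨q, hq⟩ | ⟨q, hq⟩)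
    · exact ⟨0 :: q, freeAt_cons.2 ⟨by simp [mk2, bindsX], by rwa [child_mk2_0]⟩⟩
    · exact ⟨1 :: q, freeAt_cons.2 ⟨by simp [mk2, bindsX], by rwa [child_mk2_1]⟩⟩

lemma free_mk1 {y : ℕ} {s : Shape} {M : T} (hs : ∀ z, s ≠ Shape.var z)
    (hb : bindsX y (some s) = false) : Free y (mk1 s M) ↔ Free y M := by
  constructor
  · rintro ⟨p, hp⟩
    match p with
    | [] => rw [freeAt_nil] at hp; exact absurd (by injection hp) (hs y)
    | 0 :: q =>
        rw [freeAt_cons] at hp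
        exact ⟨q, by rw [child_mk1_0] at hp; exact hp.2⟩
    | (i+1) :: q =>
        rw [freeAt_cons] at hp
        exact absurd hp.2 (by
          have : child (mk1 s M) (i+1) = (fun _ => none : T) := by funext r; rfl
          rw [this]; exact freeAt_none q)
  · rintro ⟨q, hq⟩
    exact ⟨0 :: q, freeAt_cons.2 ⟨hb, by rwa [child_mk1_0]⟩⟩

lemma nb_red {y : ℕ} {s : List Bool} {M N : T} (h : Red s M N) (hM : NB y M) :
    NB y N := by
  induction h with
  | base hb =>
      cases hb with
      | lin z M₀ N₀ =>
          exact nb_subst (nb_mk1_body (nb_mk2_left hM)) (nb_mk2_right hM)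
      | ind z M₀ N₀ =>
          exact nb_subst (nb_mk1_body (nb_mk2_left hM)) (nb_mk1_body (nb_mk2_right hM))
      | coi z M₀ N₀ =>
          exact nb_subst (nb_mk1_body (nb_mk2_left hM)) (nb_mk1_body (nb_mk2_right hM))
  | appL P h ih => exact nb_mk2 (ih (nb_mk2_left hM)) (nb_mk2_right hM)
  | appR P h ih => exact nb_mk2 (nb_mk2_left hM) (ih (nb_mk2_right hM))
  | labs z h ih => exact nb_mk1 (hM []) (ih (nb_mk1_body hM))
  | iabs z h ih => exact nb_mk1 (hM []) (ih (nb_mk1_body hM))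
  | cabs z h ih => exact nb_mk1 (hM []) (ih (nb_mk1_body hM))
  | ibox h ih => exact nb_mk1 (by simp [bindsX]) (ih (nb_mk1_body hM))
  | cbox h ih => exact nb_mk1 (by simp [bindsX]) (ih (nb_mk1_body hM))

lemma free_red {y : ℕ} {s : List Bool} {M N : T} (h : Red s M N)
    (hN : Free y N) : Free y M := by
  induction h with
  | base hb =>
      cases hb with
      | lin z M₀ N₀ =>
          obtain ⟨p, hp⟩ := hN
          rcases subst_free p hp with ⟨hyz, hM₀⟩ | hN₀
          · exact free_mk2.2 (Or.inl ((free_mk1 (by simp)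
              (by simp [bindsX]; exact fun e => hyz e.symm)).2 hM₀))
          · exact free_mk2.2 (Or.inr hN₀)
      | ind z M₀ N₀ =>
          obtain ⟨p, hp⟩ := hN
          rcases subst_free p hp with ⟨hyz, hM₀⟩ | hN₀
          · exact free_mk2.2 (Or.inl ((free_mk1 (by simp)
              (by simp [bindsX]; exact fun e => hyz e.symm)).2 hM₀))
          · exact free_mk2.2 (Or.inr ((free_mk1 (by simp) (by simp [bindsX])).2 hN₀))
      | coi z M₀ N₀ =>
          obtain ⟨p, hp⟩ := hN
          rcases subst_free p hp with ⟨hyz, hM₀⟩ | hN₀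
          · exact free_mk2.2 (Or.inl ((free_mk1 (by simp)
              (by simp [bindsX]; exact fun e => hyz e.symm)).2 hM₀))
          · exact free_mk2.2 (Or.inr ((free_mk1 (by simp) (by simp [bindsX])).2 hN₀))
  | appL P h ih =>
      rcases free_mk2.1 hN with h1 | h2
      · exact free_mk2.2 (Or.inl (ih h1))
      · exact free_mk2.2 (Or.inr h2)
  | appR P h ih =>
      rcases free_mk2.1 hN with h1 | h2
      · exact free_mk2.2 (Or.inl h1)
      · exact free_mk2.2 (Or.inr (ih h2))
  | labs z h ih =>
      by_cases hb : bindsX y (some (Shape.labs z)) = true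
      · obtain ⟨p, hp⟩ := hN
        match p with
        | [] => rw [freeAt_nil] at hp; simp [mk1] at hp
        | i :: q => rw [freeAt_cons] at hp; rw [show (mk1 (Shape.labs z) _) [] = some (Shape.labs z) from rfl] at hp; rw [hb] at hp; exact absurd hp.1 (by simp)
      · have hb' : bindsX y (some (Shape.labs z)) = false := by simpa using hb
        exact (free_mk1 (by simp) hb').2 (ih ((free_mk1 (by simp) hb').1 hN))
  | iabs z h ih =>
      by_cases hb : bindsX y (some (Shape.iabs z)) = true
      · obtain ⟨p, hp⟩ := hN
        match p with
        | [] => rw [freeAt_nil] at hp; simp [mk1] at hp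
        | i :: q => rw [freeAt_cons] at hp; rw [show (mk1 (Shape.iabs z) _) [] = some (Shape.iabs z) from rfl] at hp; rw [hb] at hp; exact absurd hp.1 (by simp)
      · have hb' : bindsX y (some (Shape.iabs z)) = false := by simpa using hb
        exact (free_mk1 (by simp) hb').2 (ih ((free_mk1 (by simp) hb').1 hN))
  | cabs z h ih =>
      by_cases hb : bindsX y (some (Shape.cabs z)) = true
      · obtain ⟨p, hp⟩ := hN
        match p with
        | [] => rw [freeAt_nil] at hp; simp [mk1] at hp
        | i :: q => rw [freeAt_cons] at hp; rw [show (mk1 (Shape.cabs z) _) [] = some (Shape.cabs z) from rfl] at hp; rw [hb] at hp; exact absurd hp.1 (by simp)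
      · have hb' : bindsX y (some (Shape.cabs z)) = false := by simpa using hb
        exact (free_mk1 (by simp) hb').2 (ih ((free_mk1 (by simp) hb').1 hN))
  | ibox h ih =>
      exact (free_mk1 (by simp) (by simp [bindsX])).2
        (ih ((free_mk1 (by simp) (by simp [bindsX])).1 hN))
  | cbox h ih =>
      exact (free_mk1 (by simp) (by simp [bindsX])).2
        (ih ((free_mk1 (by simp) (by simp [bindsX])).1 hN))

lemma nb_star {y : ℕ} {M N : T} (h : Star M N) (hM : NB y M) : NB y N := by
  induction h with
  | refl => exact hM
  | tail _ hstep ih => obtain ⟨s, hs⟩ := hstep; exact nb_red hs ih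

lemma free_star {y : ℕ} {M N : T} (h : Star M N) (hN : Free y N) : Free y M := by
  induction h with
  | refl => exact hN
  | tail _ hstep ih => obtain ⟨s, hs⟩ := hstep; exact ih (free_red hs hN)

end RedFacts

/-! ### Commutation of substitution with reduction -/

section Comm

lemma comm_red {x : ℕ} {A : T} {s : List Bool} {M N : T} (h : Red s M N) :
    (∀ y, y = x ∨ Free y A → NB y M) →
    Red s (subst x A M) (subst x A N) := by
  induction h with
  | base hb =>
      intro H
      cases hb with
      | lin z M₀ N₀ =>
          have hNx : NB x (mk2 (mk1 (Shape.labs z) M₀) N₀) := H x (Or.inl rfl)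
          have hzx : z ≠ x := by
            intro e; subst e
            have := hNx [0]
            simp [mk2, mk1, bindsX] at this
          have hzA : ¬ Free z A := by
            intro hf
            have := H z (Or.inr hf) [0]
            simp [mk2, mk1, bindsX] at this
          rw [subst_mk2, subst_mk1 x A M₀ (by simp) (by simp [bindsX, hzx]),
            subst_comp (Ne.symm hzx) hzA M₀ (nb_mk1_body (nb_mk2_left hNx))]
          exact Red.base (Basic.lin z _ _)
      | ind z M₀ N₀ =>
          have hNx : NB x (mk2 (mk1 (Shape.iabs z) M₀) (mk1 Shape.ibox N₀)) :=
            H x (Or.inl rfl)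
          have hzx : z ≠ x := by
            intro e; subst e
            have := hNx [0]
            simp [mk2, mk1, bindsX] at this
          have hzA : ¬ Free z A := by
            intro hf
            have := H z (Or.inr hf) [0]
            simp [mk2, mk1, bindsX] at this
          rw [subst_mk2, subst_mk1 x A M₀ (by simp) (by simp [bindsX, hzx]),
            subst_mk1 x A N₀ (by simp) (by simp [bindsX]),
            subst_comp (Ne.symm hzx) hzA M₀ (nb_mk1_body (nb_mk2_left hNx))]
          exact Red.base (Basic.ind z _ _)
      | coi z M₀ N₀ =>
          have hNx : NB x (mk2 (mk1 (Shape.cabs z) M₀) (mk1 Shape.cbox N₀)) :=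
            H x (Or.inl rfl)
          have hzx : z ≠ x := by
            intro e; subst e
            have := hNx [0]
            simp [mk2, mk1, bindsX] at this
          have hzA : ¬ Free z A := by
            intro hf
            have := H z (Or.inr hf) [0]
            simp [mk2, mk1, bindsX] at this
          rw [subst_mk2, subst_mk1 x A M₀ (by simp) (by simp [bindsX, hzx]),
            subst_mk1 x A N₀ (by simp) (by simp [bindsX]),
            subst_comp (Ne.symm hzx) hzA M₀ (nb_mk1_body (nb_mk2_left hNx))]
          exact Red.base (Basic.coi z _ _)
  | appL P h ih =>
      intro H
      rw [subst_mk2, subst_mk2]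
      exact Red.appL _ (ih fun y hy => nb_mk2_left (H y hy))
  | appR P h ih =>
      intro H
      rw [subst_mk2, subst_mk2]
      exact Red.appR _ (ih fun y hy => nb_mk2_right (H y hy))
  | labs z h ih =>
      intro H
      have hzx : z ≠ x := by
        intro e; subst e
        have := H z (Or.inl rfl) []
        simp [mk1, bindsX] at this
      rw [subst_mk1 x A _ (by simp) (by simp [bindsX, hzx]),
        subst_mk1 x A _ (by simp) (by simp [bindsX, hzx])]
      exact Red.labs z (ih fun y hy => nb_mk1_body (H y hy))
  | iabs z h ih =>
      intro H
      have hzx : z ≠ x := by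
        intro e; subst e
        have := H z (Or.inl rfl) []
        simp [mk1, bindsX] at this
      rw [subst_mk1 x A _ (by simp) (by simp [bindsX, hzx]),
        subst_mk1 x A _ (by simp) (by simp [bindsX, hzx])]
      exact Red.iabs z (ih fun y hy => nb_mk1_body (H y hy))
  | cabs z h ih =>
      intro H
      have hzx : z ≠ x := by
        intro e; subst e
        have := H z (Or.inl rfl) []
        simp [mk1, bindsX] at this
      rw [subst_mk1 x A _ (by simp) (by simp [bindsX, hzx]),
        subst_mk1 x A _ (by simp) (by simp [bindsX, hzx])]
      exact Red.cabs z (ih fun y hy => nb_mk1_body (H y hy))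
  | ibox h ih =>
      intro H
      rw [subst_mk1 x A _ (by simp) (by simp [bindsX]),
        subst_mk1 x A _ (by simp) (by simp [bindsX])]
      exact Red.ibox (ih fun y hy => nb_mk1_body (H y hy))
  | cbox h ih =>
      intro H
      rw [subst_mk1 x A _ (by simp) (by simp [bindsX]),
        subst_mk1 x A _ (by simp) (by simp [bindsX])]
      exact Red.cbox (ih fun y hy => nb_mk1_body (H y hy))

lemma comm_star {x : ℕ} {A : T} {M N : T} (h : Star M N) :
    (∀ y, y = x ∨ Free y A → NB y M) →
    Star (subst x A M) (subst x A N) := by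
  induction h using Relation.ReflTransGen.head_induction_on with
  | refl => intro _; exact Relation.ReflTransGen.refl
  | head hstep htail ih =>
      intro H
      obtain ⟨s, hs⟩ := hstep
      refine Relation.ReflTransGen.head ⟨s, comm_red hs H⟩ (ih ?_)
      exact fun y hy => nb_red hs (H y hy)

end Comm

/-! ### The infinitary reduction system as a fixed point -/

section IRFix

lemma IRCo_mono {S S' : Bool → T → T → Prop}
    (h : ∀ b M N, S b M N → S' b M N) :
    ∀ {b M N}, IRCo S b M N → IRCo S' b M N := by
  rintro b M N ⟨hb, mid, h1, h2⟩
  exact ⟨hb, mid, h1, h false _ _ h2⟩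

lemma IRInd_mono {R R' : Bool → T → T → Prop}
    (h : ∀ b M N, R b M N → R' b M N) :
    ∀ {b M N}, IRInd R b M N → IRInd R' b M N := by
  intro b M N hi
  induction hi with
  | base hr => exact IRInd.base (h _ _ _ hr)
  | varr x => exact IRInd.varr x
  | app h1 h2 ih1 ih2 => exact IRInd.app ih1 ih2
  | labs x h1 ih => exact IRInd.labs x ih
  | iabs x h1 ih => exact IRInd.iabs x ih
  | cabs x h1 ih => exact IRInd.cabs x ih
  | ibox h1 ih => exact IRInd.ibox ih
  | cbox h1 ih => exact IRInd.cbox ih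

lemma irsys_unfold {b : Bool} {M N : T} (h : IRSys b M N) :
    IRInd (IRCo IRSys) b M N := by
  obtain ⟨S, hS, hm⟩ := h
  exact IRInd_mono (fun b' M' N' hr => IRCo_mono (fun b'' M'' N'' hs => ⟨S, hS, hs⟩) hr)
    (hS _ _ _ hm)

lemma irsys_fold {b : Bool} {M N : T} (h : IRInd (IRCo IRSys) b M N) :
    IRSys b M N := by
  refine ⟨fun b' M' N' => IRInd (IRCo IRSys) b' M' N', ?_, h⟩
  intro b' M' N' h'
  exact IRInd_mono (fun b'' M'' N'' hr =>
    IRCo_mono (fun b3 M3 N3 hs => irsys_unfold hs) hr) h'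

/-- shorthand for the unfolded system -/
abbrev Ilv (b : Bool) (M N : T) : Prop := IRInd (IRCo IRSys) b M N

lemma ilv_true_inv {M N : T} (h : Ilv true M N) :
    ∃ mid, Star M mid ∧ IRSys false mid N := by
  cases h with
  | base hr => obtain ⟨_, mid, h1, h2⟩ := hr; exact ⟨mid, h1, h2⟩

lemma freeAt_mk2_cases {y : ℕ} {A B : T} {p : List ℕ}
    (h : FreeAt y (mk2 A B) p) :
    (∃ q, p = 0 :: q ∧ FreeAt y A q) ∨ (∃ q, p = 1 :: q ∧ FreeAt y B q) := by
  match p with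
  | [] => rw [freeAt_nil] at h; simp [mk2] at h
  | 0 :: q =>
      rw [freeAt_cons, child_mk2_0] at h
      exact Or.inl ⟨q, rfl, h.2⟩
  | 1 :: q =>
      rw [freeAt_cons, child_mk2_1] at h
      exact Or.inr ⟨q, rfl, h.2⟩
  | (i+2) :: q =>
      rw [freeAt_cons] at h
      refine absurd h.2 ?_
      have : child (mk2 A B) (i+2) = (fun _ => none : T) := by funext r; rfl
      rw [this]; exact freeAt_none q

lemma freeAt_mk1_cases {y : ℕ} {s : Shape} {A : T} {p : List ℕ}
    (hs : ∀ z, s ≠ Shape.var z) (h : FreeAt y (mk1 s A) p) :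
    ∃ q, p = 0 :: q ∧ bindsX y (some s) = false ∧ FreeAt y A q := by
  match p with
  | [] => rw [freeAt_nil] at h; exact absurd (by injection h) (hs y)
  | 0 :: q =>
      rw [freeAt_cons, child_mk1_0] at h
      exact ⟨q, rfl, h.1, h.2⟩
  | (i+1) :: q =>
      rw [freeAt_cons] at h
      refine absurd h.2 ?_
      have : child (mk1 s A) (i+1) = (fun _ => none : T) := by funext r; rfl
      rw [this]; exact freeAt_none q

lemma irsys_shrink {y : ℕ} :
    ∀ k : ℕ, ∀ b (M M' : T) (p : List ℕ),
      2 * p.length + (cond b 1 0) ≤ k → IRSys b M M' → FreeAt y M' p →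
      Free y M := by
  intro k
  induction k using Nat.strong_induction_on with
  | _ k IH =>
    intro b M M' p hk hir hf
    cases irsys_unfold hir with
    | base hr =>
        obtain ⟨hb, mid, h1, h2⟩ := hr
        subst hb
        have hk' : 2 * p.length + 1 ≤ k := by simpa using hk
        have hklt : k - 1 < k := by omega
        have := IH (k - 1) hklt false mid M' p (by simp; omega) h2 hf
        exact free_star h1 this
    | varr x =>
        match p with
        | [] =>
            rw [freeAt_nil] at hf
            have : x = y := by simpa [mk0] using hf
            subst this
            exact ⟨[], freeAt_nil.2 rfl⟩
        | i :: q =>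
            rw [freeAt_cons] at hf
            refine absurd hf.2 ?_
            have : child (mk0 (Shape.var x)) i = (fun _ => none : T) := by
              funext r; simp [child, mk0]
            rw [this]; exact freeAt_none q
    | app h1 h2 =>
        rcases freeAt_mk2_cases hf with ⟨q, hp, hq⟩ | ⟨q, hp, hq⟩
        · subst hp
          have := IH (2 * q.length) (by simp at hk; omega) false _ _ q
            (by simp) (irsys_fold h1) hq
          exact free_mk2.2 (Or.inl this)
        · subst hp
          have := IH (2 * q.length) (by simp at hk; omega) false _ _ q
            (by simp) (irsys_fold h2) hq
          exact free_mk2.2 (Or.inr this)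
    | labs x h1 =>
        obtain ⟨q, hp, hb, hq⟩ := freeAt_mk1_cases (by simp) hf
        subst hp
        have := IH (2 * q.length) (by simp at hk; omega) false _ _ q
          (by simp) (irsys_fold h1) hq
        exact (free_mk1 (by simp) hb).2 this
    | iabs x h1 =>
        obtain ⟨q, hp, hb, hq⟩ := freeAt_mk1_cases (by simp) hf
        subst hp
        have := IH (2 * q.length) (by simp at hk; omega) false _ _ q
          (by simp) (irsys_fold h1) hq
        exact (free_mk1 (by simp) hb).2 this
    | cabs x h1 =>
        obtain ⟨q, hp, hb, hq⟩ := freeAt_mk1_cases (by simp) hf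
        subst hp
        have := IH (2 * q.length) (by simp at hk; omega) false _ _ q
          (by simp) (irsys_fold h1) hq
        exact (free_mk1 (by simp) hb).2 this
    | ibox h1 =>
        obtain ⟨q, hp, hb, hq⟩ := freeAt_mk1_cases (by simp) hf
        subst hp
        have := IH (2 * q.length) (by simp at hk; omega) false _ _ q
          (by simp) (irsys_fold h1) hq
        exact (free_mk1 (by simp) hb).2 this
    | cbox h1 =>
        obtain ⟨q, hp, hb, hq⟩ := freeAt_mk1_cases (by simp) hf
        subst hp
        have := IH (2 * q.length + 1) (by simp at hk; omega) true _ _ q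
          (by simp) (irsys_fold h1) hq
        exact (free_mk1 (by simp) hb).2 this

lemma irsys_not_free {y : ℕ} {b : Bool} {M M' : T}
    (h : IRSys b M M') (hM : ¬ Free y M) : ¬ Free y M' := by
  rintro ⟨p, hp⟩
  exact hM (irsys_shrink (2 * p.length + 1) b M M' p (by cases b <;> simp) h hp)

end IRFix

/-! ### Inversion lemmas for the auxiliary relation -/

section IlvInv

lemma ilv_inv_var {z : ℕ} {L : T} (h : Ilv false (mk0 (Shape.var z)) L) :
    L = mk0 (Shape.var z) := by
  revert h
  generalize hM : (mk0 (Shape.var z) : T) = M0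
  intro h
  cases h with
  | base hr => exact absurd hr.1 (by simp)
  | varr x =>
      have : z = x := by simpa [mk0] using congrFun hM []
      subst this; rfl
  | app h1 h2 => exact absurd (congrFun hM []) (by simp [mk0, mk1, mk2])
  | labs x h1 => exact absurd (congrFun hM []) (by simp [mk0, mk1, mk2])
  | iabs x h1 => exact absurd (congrFun hM []) (by simp [mk0, mk1, mk2])
  | cabs x h1 => exact absurd (congrFun hM []) (by simp [mk0, mk1, mk2])
  | ibox h1 => exact absurd (congrFun hM []) (by simp [mk0, mk1, mk2])
  | cbox h1 => exact absurd (congrFun hM []) (by simp [mk0, mk1, mk2])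

lemma ilv_inv_app {A B L : T} (h : Ilv false (mk2 A B) L) :
    ∃ A' B', L = mk2 A' B' ∧ Ilv false A A' ∧ Ilv false B B' := by
  revert h
  generalize hM : (mk2 A B : T) = M0
  intro h
  cases h with
  | base hr => exact absurd hr.1 (by simp)
  | varr x => exact absurd (congrFun hM []) (by simp [mk0, mk1, mk2])
  | app h1 h2 =>
      obtain ⟨e1, e2⟩ := mk2_inj hM
      subst e1; subst e2
      exact ⟨_, _, rfl, h1, h2⟩
  | labs x h1 => exact absurd (congrFun hM []) (by simp [mk0, mk1, mk2])
  | iabs x h1 => exact absurd (congrFun hM []) (by simp [mk0, mk1, mk2])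
  | cabs x h1 => exact absurd (congrFun hM []) (by simp [mk0, mk1, mk2])
  | ibox h1 => exact absurd (congrFun hM []) (by simp [mk0, mk1, mk2])
  | cbox h1 => exact absurd (congrFun hM []) (by simp [mk0, mk1, mk2])

lemma ilv_inv_labs {z : ℕ} {A L : T} (h : Ilv false (mk1 (Shape.labs z) A) L) :
    ∃ A', L = mk1 (Shape.labs z) A' ∧ Ilv false A A' := by
  revert h
  generalize hM : (mk1 (Shape.labs z) A : T) = M0
  intro h
  cases h with
  | base hr => exact absurd hr.1 (by simp)
  | varr x => exact absurd (congrFun hM []) (by simp [mk0, mk1, mk2])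
  | app h1 h2 => exact absurd (congrFun hM []) (by simp [mk0, mk1, mk2])
  | labs x h1 =>
      obtain ⟨e1, e2⟩ := mk1_inj hM
      injection e1 with e1'
      subst e1'; subst e2
      exact ⟨_, rfl, h1⟩
  | iabs x h1 => exact absurd (congrFun hM []) (by simp [mk0, mk1, mk2])
  | cabs x h1 => exact absurd (congrFun hM []) (by simp [mk0, mk1, mk2])
  | ibox h1 => exact absurd (congrFun hM []) (by simp [mk0, mk1, mk2])
  | cbox h1 => exact absurd (congrFun hM []) (by simp [mk0, mk1, mk2])

lemma ilv_inv_iabs {z : ℕ} {A L : T} (h : Ilv false (mk1 (Shape.iabs z) A) L) :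
    ∃ A', L = mk1 (Shape.iabs z) A' ∧ Ilv false A A' := by
  revert h
  generalize hM : (mk1 (Shape.iabs z) A : T) = M0
  intro h
  cases h with
  | base hr => exact absurd hr.1 (by simp)
  | varr x => exact absurd (congrFun hM []) (by simp [mk0, mk1, mk2])
  | app h1 h2 => exact absurd (congrFun hM []) (by simp [mk0, mk1, mk2])
  | labs x h1 => exact absurd (congrFun hM []) (by simp [mk0, mk1, mk2])
  | iabs x h1 =>
      obtain ⟨e1, e2⟩ := mk1_inj hM
      injection e1 with e1'
      subst e1'; subst e2
      exact ⟨_, rfl, h1⟩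
  | cabs x h1 => exact absurd (congrFun hM []) (by simp [mk0, mk1, mk2])
  | ibox h1 => exact absurd (congrFun hM []) (by simp [mk0, mk1, mk2])
  | cbox h1 => exact absurd (congrFun hM []) (by simp [mk0, mk1, mk2])

lemma ilv_inv_cabs {z : ℕ} {A L : T} (h : Ilv false (mk1 (Shape.cabs z) A) L) :
    ∃ A', L = mk1 (Shape.cabs z) A' ∧ Ilv false A A' := by
  revert h
  generalize hM : (mk1 (Shape.cabs z) A : T) = M0
  intro h
  cases h with
  | base hr => exact absurd hr.1 (by simp)
  | varr x => exact absurd (congrFun hM []) (by simp [mk0, mk1, mk2])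
  | app h1 h2 => exact absurd (congrFun hM []) (by simp [mk0, mk1, mk2])
  | labs x h1 => exact absurd (congrFun hM []) (by simp [mk0, mk1, mk2])
  | iabs x h1 => exact absurd (congrFun hM []) (by simp [mk0, mk1, mk2])
  | cabs x h1 =>
      obtain ⟨e1, e2⟩ := mk1_inj hM
      injection e1 with e1'
      subst e1'; subst e2
      exact ⟨_, rfl, h1⟩
  | ibox h1 => exact absurd (congrFun hM []) (by simp [mk0, mk1, mk2])
  | cbox h1 => exact absurd (congrFun hM []) (by simp [mk0, mk1, mk2])

lemma ilv_inv_ibox {A L : T} (h : Ilv false (mk1 Shape.ibox A) L) :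
    ∃ A', L = mk1 Shape.ibox A' ∧ Ilv false A A' := by
  revert h
  generalize hM : (mk1 Shape.ibox A : T) = M0
  intro h
  cases h with
  | base hr => exact absurd hr.1 (by simp)
  | varr x => exact absurd (congrFun hM []) (by simp [mk0, mk1, mk2])
  | app h1 h2 => exact absurd (congrFun hM []) (by simp [mk0, mk1, mk2])
  | labs x h1 => exact absurd (congrFun hM []) (by simp [mk0, mk1, mk2])
  | iabs x h1 => exact absurd (congrFun hM []) (by simp [mk0, mk1, mk2])
  | cabs x h1 => exact absurd (congrFun hM []) (by simp [mk0, mk1, mk2])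
  | ibox h1 =>
      obtain ⟨e1, e2⟩ := mk1_inj hM
      subst e2
      exact ⟨_, rfl, h1⟩
  | cbox h1 => exact absurd (congrFun hM []) (by simp [mk0, mk1, mk2])

lemma ilv_inv_cbox {A L : T} (h : Ilv false (mk1 Shape.cbox A) L) :
    ∃ A', L = mk1 Shape.cbox A' ∧ Ilv true A A' := by
  revert h
  generalize hM : (mk1 Shape.cbox A : T) = M0
  intro h
  cases h with
  | base hr => exact absurd hr.1 (by simp)
  | varr x => exact absurd (congrFun hM []) (by simp [mk0, mk1, mk2])
  | app h1 h2 => exact absurd (congrFun hM []) (by simp [mk0, mk1, mk2])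
  | labs x h1 => exact absurd (congrFun hM []) (by simp [mk0, mk1, mk2])
  | iabs x h1 => exact absurd (congrFun hM []) (by simp [mk0, mk1, mk2])
  | cabs x h1 => exact absurd (congrFun hM []) (by simp [mk0, mk1, mk2])
  | ibox h1 => exact absurd (congrFun hM []) (by simp [mk0, mk1, mk2])
  | cbox h1 =>
      obtain ⟨e1, e2⟩ := mk1_inj hM
      subst e2
      exact ⟨_, rfl, h1⟩

end IlvInv

/-! ### Substitution lemmas for the auxiliary relation -/

section SubstIR

/-- candidate set for substitution of terms not occurring under coinductive
boxes -/
def SPinv : Bool → T → T → Prop := fun b P Q =>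
  IRSys b P Q ∨ (b = false ∧ ∃ x A B M M', P = subst x A M ∧ Q = subst x B M' ∧
    IRSys false M M' ∧ IRSys false A B ∧ Pinv x M)

lemma lift_SPinv : ∀ {b M N}, Ilv b M N → IRInd (IRCo SPinv) b M N :=
  fun h => IRInd_mono (fun _ _ _ hr =>
    IRCo_mono (fun _ _ _ hs => Or.inl hs) hr) h

lemma subst_pinv_aux : ∀ {b M M'}, Ilv b M M' → b = false →
    ∀ x A B, IRSys false A B → Pinv x M →
    IRInd (IRCo SPinv) false (subst x A M) (subst x B M') := by
  intro b M M' h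
  induction h with
  | base hr => intro hb; rw [hb] at hr; exact absurd hr.1 (by simp)
  | varr z =>
      intro _ x A B hAB hP
      by_cases hzx : z = x
      · subst hzx
        rw [subst_var_eq, subst_var_eq]
        exact lift_SPinv (irsys_unfold hAB)
      · rw [subst_var_ne A hzx, subst_var_ne B hzx]
        exact IRInd.varr z
  | app h1 h2 ih1 ih2 =>
      intro _ x A B hAB hP
      rw [subst_mk2, subst_mk2]
      refine IRInd.app (ih1 rfl x A B hAB ?_) (ih2 rfl x A B hAB ?_)
      · have := pinv_child hP (by simp [mk2, bindsX]) 0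
        rwa [child_mk2_0] at this
      · have := pinv_child hP (by simp [mk2, bindsX]) 1
        rwa [child_mk2_1] at this
  | labs z h1 ih =>
      intro _ x A B hAB hP
      by_cases hzx : z = x
      · subst hzx
        rw [subst_stop (by simp [mk1, bindsX]), subst_stop (by simp [mk1, bindsX])]
        exact lift_SPinv (IRInd.labs _ h1)
      · rw [subst_mk1 x A _ (by simp) (by simp [bindsX, hzx]),
          subst_mk1 x B _ (by simp) (by simp [bindsX, hzx])]
        refine IRInd.labs z (ih rfl x A B hAB ?_)
        have := pinv_child hP (by simp [mk1, bindsX, hzx]) 0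
        rwa [child_mk1_0] at this
  | iabs z h1 ih =>
      intro _ x A B hAB hP
      by_cases hzx : z = x
      · subst hzx
        rw [subst_stop (by simp [mk1, bindsX]), subst_stop (by simp [mk1, bindsX])]
        exact lift_SPinv (IRInd.iabs _ h1)
      · rw [subst_mk1 x A _ (by simp) (by simp [bindsX, hzx]),
          subst_mk1 x B _ (by simp) (by simp [bindsX, hzx])]
        refine IRInd.iabs z (ih rfl x A B hAB ?_)
        have := pinv_child hP (by simp [mk1, bindsX, hzx]) 0
        rwa [child_mk1_0] at this
  | cabs z h1 ih =>
      intro _ x A B hAB hP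
      by_cases hzx : z = x
      · subst hzx
        rw [subst_stop (by simp [mk1, bindsX]), subst_stop (by simp [mk1, bindsX])]
        exact lift_SPinv (IRInd.cabs _ h1)
      · rw [subst_mk1 x A _ (by simp) (by simp [bindsX, hzx]),
          subst_mk1 x B _ (by simp) (by simp [bindsX, hzx])]
        refine IRInd.cabs z (ih rfl x A B hAB ?_)
        have := pinv_child hP (by simp [mk1, bindsX, hzx]) 0
        rwa [child_mk1_0] at this
  | ibox h1 ih =>
      intro _ x A B hAB hP
      rw [subst_mk1 x A _ (by simp) (by simp [bindsX]),
        subst_mk1 x B _ (by simp) (by simp [bindsX])]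
      refine IRInd.ibox (ih rfl x A B hAB ?_)
      have := pinv_child hP (by simp [mk1, bindsX]) 0
      rwa [child_mk1_0] at this
  | cbox h1 =>
      intro _ x A B hAB hP
      have hnc : ¬ Free x _ := pinv_cbox hP
      obtain ⟨mid, hstar, hmid⟩ := ilv_true_inv h1
      have hnc' : ¬ Free x _ := irsys_not_free (irsys_fold h1) hnc
      rw [subst_mk1 x A _ (by simp) (by simp [bindsX]),
        subst_mk1 x B _ (by simp) (by simp [bindsX]),
        subst_id hnc, subst_id hnc']
      exact IRInd.cbox (IRInd.base ⟨rfl, mid, hstar, Or.inl hmid⟩)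

lemma SPinv_closed : ∀ b P Q, SPinv b P Q → IRInd (IRCo SPinv) b P Q := by
  rintro b P Q (h | ⟨hb, x, A, B, M, M', rfl, rfl, hMM, hAB, hP⟩)
  · exact lift_SPinv (irsys_unfold h)
  · subst hb
    exact subst_pinv_aux (irsys_unfold hMM) rfl x A B hAB hP

lemma subst_pinv {x : ℕ} {A B M M' : T} (hMM : IRSys false M M')
    (hAB : IRSys false A B) (hP : Pinv x M) :
    IRSys false (subst x A M) (subst x B M') :=
  ⟨SPinv, SPinv_closed, Or.inr ⟨rfl, x, A, B, M, M', rfl, rfl, hMM, hAB, hP⟩⟩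

/-- candidate set for substitution of terms whose free variables are never
bound in the target -/
def SNB : Bool → T → T → Prop := fun b P Q =>
  IRSys b P Q ∨ (b = false ∧ ∃ x A B M M', P = subst x A M ∧ Q = subst x B M' ∧
    IRSys false M M' ∧ IRSys false A B ∧
    (∀ y, y = x ∨ Free y A → NB y M))

lemma lift_SNB : ∀ {b M N}, Ilv b M N → IRInd (IRCo SNB) b M N :=
  fun h => IRInd_mono (fun _ _ _ hr =>
    IRCo_mono (fun _ _ _ hs => Or.inl hs) hr) h

lemma subst_nb_aux : ∀ {b M M'}, Ilv b M M' → b = false →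
    ∀ x A B, IRSys false A B → (∀ y, y = x ∨ Free y A → NB y M) →
    IRInd (IRCo SNB) false (subst x A M) (subst x B M') := by
  intro b M M' h
  induction h with
  | base hr => intro hb; rw [hb] at hr; exact absurd hr.1 (by simp)
  | varr z =>
      intro _ x A B hAB hH
      by_cases hzx : z = x
      · subst hzx
        rw [subst_var_eq, subst_var_eq]
        exact lift_SNB (irsys_unfold hAB)
      · rw [subst_var_ne A hzx, subst_var_ne B hzx]
        exact IRInd.varr z
  | app h1 h2 ih1 ih2 =>
      intro _ x A B hAB hH
      rw [subst_mk2, subst_mk2]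
      exact IRInd.app
        (ih1 rfl x A B hAB fun y hy => nb_mk2_left (hH y hy))
        (ih2 rfl x A B hAB fun y hy => nb_mk2_right (hH y hy))
  | labs z h1 ih =>
      intro _ x A B hAB hH
      have hzx : z ≠ x := by
        intro e; subst e
        have := hH z (Or.inl rfl) []
        simp [mk1, bindsX] at this
      rw [subst_mk1 x A _ (by simp) (by simp [bindsX, hzx]),
        subst_mk1 x B _ (by simp) (by simp [bindsX, hzx])]
      exact IRInd.labs z (ih rfl x A B hAB fun y hy => nb_mk1_body (hH y hy))
  | iabs z h1 ih =>
      intro _ x A B hAB hH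
      have hzx : z ≠ x := by
        intro e; subst e
        have := hH z (Or.inl rfl) []
        simp [mk1, bindsX] at this
      rw [subst_mk1 x A _ (by simp) (by simp [bindsX, hzx]),
        subst_mk1 x B _ (by simp) (by simp [bindsX, hzx])]
      exact IRInd.iabs z (ih rfl x A B hAB fun y hy => nb_mk1_body (hH y hy))
  | cabs z h1 ih =>
      intro _ x A B hAB hH
      have hzx : z ≠ x := by
        intro e; subst e
        have := hH z (Or.inl rfl) []
        simp [mk1, bindsX] at this
      rw [subst_mk1 x A _ (by simp) (by simp [bindsX, hzx]),
        subst_mk1 x B _ (by simp) (by simp [bindsX, hzx])]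
      exact IRInd.cabs z (ih rfl x A B hAB fun y hy => nb_mk1_body (hH y hy))
  | ibox h1 ih =>
      intro _ x A B hAB hH
      rw [subst_mk1 x A _ (by simp) (by simp [bindsX]),
        subst_mk1 x B _ (by simp) (by simp [bindsX])]
      exact IRInd.ibox (ih rfl x A B hAB fun y hy => nb_mk1_body (hH y hy))
  | cbox h1 =>
      intro _ x A B hAB hH
      obtain ⟨mid, hstar, hmid⟩ := ilv_true_inv h1
      rw [subst_mk1 x A _ (by simp) (by simp [bindsX]),
        subst_mk1 x B _ (by simp) (by simp [bindsX])]
      have hHc : ∀ y, y = x ∨ Free y A → NB y _ :=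
        fun y hy => nb_mk1_body (hH y hy)
      refine IRInd.cbox (IRInd.base ⟨rfl, subst x A mid, comm_star hstar hHc, ?_⟩)
      exact Or.inr ⟨rfl, x, A, B, mid, _, rfl, rfl, hmid, hAB,
        fun y hy => nb_star hstar (hHc y hy)⟩

lemma SNB_closed : ∀ b P Q, SNB b P Q → IRInd (IRCo SNB) b P Q := by
  rintro b P Q (h | ⟨hb, x, A, B, M, M', rfl, rfl, hMM, hAB, hH⟩)
  · exact lift_SNB (irsys_unfold h)
  · subst hb
    exact subst_nb_aux (irsys_unfold hMM) rfl x A B hAB hH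

lemma subst_nb {x : ℕ} {A B M M' : T} (hMM : IRSys false M M')
    (hAB : IRSys false A B) (hH : ∀ y, y = x ∨ Free y A → NB y M) :
    IRSys false (subst x A M) (subst x B M') :=
  ⟨SNB, SNB_closed, Or.inr ⟨rfl, x, A, B, M, M', rfl, rfl, hMM, hAB, hH⟩⟩

end SubstIR

/-! ### Well-formation in ℓΛ∞^{4S} as a fixed point -/

section WF4Fix

lemma CoStep4_mono {S S' : Env4 → T → Prop} (h : ∀ Δ N, S Δ N → S' Δ N) :
    ∀ {Γ M}, CoStep4 S Γ M → CoStep4 S' Γ M := by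
  rintro Γ M ⟨Γ', N, h1, h2, h3⟩
  exact ⟨Γ', N, h1, h2, h Γ' N h3⟩

lemma WF4Step_mono {R R' : Env4 → T → Prop} (h : ∀ Δ N, R Δ N → R' Δ N) :
    ∀ {Γ M}, WF4Step R Γ M → WF4Step R' Γ M := by
  intro Γ M hw
  induction hw with
  | base hr => exact WF4Step.base (h _ _ hr)
  | vl x h1 h2 => exact WF4Step.vl x h1 h2
  | vd x h1 h2 => exact WF4Step.vd x h1 h2
  | va x h1 h2 => exact WF4Step.va x h1 h2
  | app h1 h2 h3 ih2 ih3 => exact WF4Step.app h1 ih2 ih3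
  | ll h1 h2 ih => exact WF4Step.ll h1 ih
  | li1 h1 h2 ih => exact WF4Step.li1 h1 ih
  | li2 h1 h2 ih => exact WF4Step.li2 h1 ih
  | lc h1 h2 ih => exact WF4Step.lc h1 ih
  | mi h1 h2 ih => exact WF4Step.mi h1 ih

lemma wf4_unfold {Γ : Env4} {M : T} (h : WF4 Γ M) :
    WF4Step (CoStep4 WF4) Γ M := by
  obtain ⟨S, hS, hm⟩ := h
  exact WF4Step_mono (fun Δ N hr => CoStep4_mono (fun Δ' N' hs => ⟨S, hS, hs⟩) hr)
    (hS _ _ hm)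

lemma wf4_fold {Γ : Env4} {M : T} (h : WF4Step (CoStep4 WF4) Γ M) :
    WF4 Γ M := by
  refine ⟨fun Δ N => WF4Step (CoStep4 WF4) Δ N, ?_, h⟩
  intro Δ N h'
  exact WF4Step_mono (fun Δ' N' hr =>
    CoStep4_mono (fun Δ2 N2 hs => wf4_unfold hs) hr) h'

lemma wf4_inv_app {Γ : Env4} {A B : T} (h : WF4 Γ (mk2 A B)) :
    ∃ Γ₁ Γ₂, Split4 Γ Γ₁ Γ₂ ∧ WF4 Γ₁ A ∧ WF4 Γ₂ B := by
  have h' := wf4_unfold h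
  revert h'
  generalize hM : (mk2 A B : T) = M0
  intro h'
  cases h' with
  | base hr =>
      obtain ⟨Γ', N, h1, h2, h3⟩ := hr
      rw [h2] at hM
      exact absurd (congrFun hM []) (by simp [mk1, mk2])
  | vl x h1 h2 => exact absurd (congrFun hM []) (by simp [mk0, mk2])
  | vd x h1 h2 => exact absurd (congrFun hM []) (by simp [mk0, mk2])
  | va x h1 h2 => exact absurd (congrFun hM []) (by simp [mk0, mk2])
  | app h1 h2 h3 =>
      obtain ⟨e1, e2⟩ := mk2_inj hM
      subst e1; subst e2
      exact ⟨_, _, h1, wf4_fold h2, wf4_fold h3⟩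
  | ll h1 h2 => exact absurd (congrFun hM []) (by simp [mk1, mk2])
  | li1 h1 h2 => exact absurd (congrFun hM []) (by simp [mk1, mk2])
  | li2 h1 h2 => exact absurd (congrFun hM []) (by simp [mk1, mk2])
  | lc h1 h2 => exact absurd (congrFun hM []) (by simp [mk1, mk2])
  | mi h1 h2 => exact absurd (congrFun hM []) (by simp [mk1, mk2])

lemma wf4_inv_labs {Γ : Env4} {z : ℕ} {A : T}
    (h : WF4 Γ (mk1 (Shape.labs z) A)) :
    Γ z = none ∧ WF4 (Γ.upd z (some Pat4.lin)) A := by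
  have h' := wf4_unfold h
  revert h'
  generalize hM : (mk1 (Shape.labs z) A : T) = M0
  intro h'
  cases h' with
  | base hr =>
      obtain ⟨Γ', N, h1, h2, h3⟩ := hr
      rw [h2] at hM
      exact absurd (congrFun hM []) (by simp [mk1])
  | vl x h1 h2 => exact absurd (congrFun hM []) (by simp [mk0, mk1])
  | vd x h1 h2 => exact absurd (congrFun hM []) (by simp [mk0, mk1])
  | va x h1 h2 => exact absurd (congrFun hM []) (by simp [mk0, mk1])
  | app h1 h2 h3 => exact absurd (congrFun hM []) (by simp [mk1, mk2])
  | ll h1 h2 =>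
      obtain ⟨e1, e2⟩ := mk1_inj hM
      injection e1 with e1'
      subst e1'; subst e2
      exact ⟨h1, wf4_fold h2⟩
  | li1 h1 h2 => exact absurd (congrFun hM []) (by simp [mk1])
  | li2 h1 h2 => exact absurd (congrFun hM []) (by simp [mk1])
  | lc h1 h2 => exact absurd (congrFun hM []) (by simp [mk1])
  | mi h1 h2 => exact absurd (congrFun hM []) (by simp [mk1])

lemma wf4_inv_iabs {Γ : Env4} {z : ℕ} {A : T}
    (h : WF4 Γ (mk1 (Shape.iabs z) A)) :
    Γ z = none ∧ (WF4 (Γ.upd z (some Pat4.dm)) A ∨ WF4 (Γ.upd z (some Pat4.im)) A) := by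
  have h' := wf4_unfold h
  revert h'
  generalize hM : (mk1 (Shape.iabs z) A : T) = M0
  intro h'
  cases h' with
  | base hr =>
      obtain ⟨Γ', N, h1, h2, h3⟩ := hr
      rw [h2] at hM
      exact absurd (congrFun hM []) (by simp [mk1])
  | vl x h1 h2 => exact absurd (congrFun hM []) (by simp [mk0, mk1])
  | vd x h1 h2 => exact absurd (congrFun hM []) (by simp [mk0, mk1])
  | va x h1 h2 => exact absurd (congrFun hM []) (by simp [mk0, mk1])
  | app h1 h2 h3 => exact absurd (congrFun hM []) (by simp [mk1, mk2])
  | ll h1 h2 => exact absurd (congrFun hM []) (by simp [mk1])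
  | li1 h1 h2 =>
      obtain ⟨e1, e2⟩ := mk1_inj hM
      injection e1 with e1'
      subst e1'; subst e2
      exact ⟨h1, Or.inl (wf4_fold h2)⟩
  | li2 h1 h2 =>
      obtain ⟨e1, e2⟩ := mk1_inj hM
      injection e1 with e1'
      subst e1'; subst e2
      exact ⟨h1, Or.inr (wf4_fold h2)⟩
  | lc h1 h2 => exact absurd (congrFun hM []) (by simp [mk1])
  | mi h1 h2 => exact absurd (congrFun hM []) (by simp [mk1])

lemma wf4_inv_cabs {Γ : Env4} {z : ℕ} {A : T}
    (h : WF4 Γ (mk1 (Shape.cabs z) A)) :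
    Γ z = none ∧ WF4 (Γ.upd z (some Pat4.cm)) A := by
  have h' := wf4_unfold h
  revert h'
  generalize hM : (mk1 (Shape.cabs z) A : T) = M0
  intro h'
  cases h' with
  | base hr =>
      obtain ⟨Γ', N, h1, h2, h3⟩ := hr
      rw [h2] at hM
      exact absurd (congrFun hM []) (by simp [mk1])
  | vl x h1 h2 => exact absurd (congrFun hM []) (by simp [mk0, mk1])
  | vd x h1 h2 => exact absurd (congrFun hM []) (by simp [mk0, mk1])
  | va x h1 h2 => exact absurd (congrFun hM []) (by simp [mk0, mk1])
  | app h1 h2 h3 => exact absurd (congrFun hM []) (by simp [mk1, mk2])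
  | ll h1 h2 => exact absurd (congrFun hM []) (by simp [mk1])
  | li1 h1 h2 => exact absurd (congrFun hM []) (by simp [mk1])
  | li2 h1 h2 => exact absurd (congrFun hM []) (by simp [mk1])
  | lc h1 h2 =>
      obtain ⟨e1, e2⟩ := mk1_inj hM
      injection e1 with e1'
      subst e1'; subst e2
      exact ⟨h1, wf4_fold h2⟩
  | mi h1 h2 => exact absurd (congrFun hM []) (by simp [mk1])

lemma wf4_inv_ibox {Γ : Env4} {A : T} (h : WF4 Γ (mk1 Shape.ibox A)) :
    ∃ Γ', MiEnv Γ Γ' ∧ WF4 Γ' A := by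
  have h' := wf4_unfold h
  revert h'
  generalize hM : (mk1 Shape.ibox A : T) = M0
  intro h'
  cases h' with
  | base hr =>
      obtain ⟨Γ', N, h1, h2, h3⟩ := hr
      rw [h2] at hM
      exact absurd (congrFun hM []) (by simp [mk1])
  | vl x h1 h2 => exact absurd (congrFun hM []) (by simp [mk0, mk1])
  | vd x h1 h2 => exact absurd (congrFun hM []) (by simp [mk0, mk1])
  | va x h1 h2 => exact absurd (congrFun hM []) (by simp [mk0, mk1])
  | app h1 h2 h3 => exact absurd (congrFun hM []) (by simp [mk1, mk2])
  | ll h1 h2 => exact absurd (congrFun hM []) (by simp [mk1])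
  | li1 h1 h2 => exact absurd (congrFun hM []) (by simp [mk1])
  | li2 h1 h2 => exact absurd (congrFun hM []) (by simp [mk1])
  | lc h1 h2 => exact absurd (congrFun hM []) (by simp [mk1])
  | mi h1 h2 =>
      obtain ⟨e1, e2⟩ := mk1_inj hM
      subst e2
      exact ⟨_, h1, wf4_fold h2⟩

lemma wf4_inv_cbox {Γ : Env4} {A : T} (h : WF4 Γ (mk1 Shape.cbox A)) :
    ∃ Γ', McEnv Γ Γ' ∧ WF4 Γ' A := by
  have h' := wf4_unfold h
  revert h'
  generalize hM : (mk1 Shape.cbox A : T) = M0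
  intro h'
  cases h' with
  | base hr =>
      obtain ⟨Γ', N, h1, h2, h3⟩ := hr
      rw [h2] at hM
      obtain ⟨e1, e2⟩ := mk1_inj hM
      subst e2
      exact ⟨Γ', h1, h3⟩
  | vl x h1 h2 => exact absurd (congrFun hM []) (by simp [mk0, mk1])
  | vd x h1 h2 => exact absurd (congrFun hM []) (by simp [mk0, mk1])
  | va x h1 h2 => exact absurd (congrFun hM []) (by simp [mk0, mk1])
  | app h1 h2 h3 => exact absurd (congrFun hM []) (by simp [mk1, mk2])
  | ll h1 h2 => exact absurd (congrFun hM []) (by simp [mk1])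
  | li1 h1 h2 => exact absurd (congrFun hM []) (by simp [mk1])
  | li2 h1 h2 => exact absurd (congrFun hM []) (by simp [mk1])
  | lc h1 h2 => exact absurd (congrFun hM []) (by simp [mk1])
  | mi h1 h2 => exact absurd (congrFun hM []) (by simp [mk1])

end WF4Fix

/-! ### Environment discipline along positions -/

section WF4Pos

lemma freeAt_mk0_cases {y : ℕ} {s : Shape} {p : List ℕ}
    (h : FreeAt y (mk0 s) p) : p = [] ∧ s = Shape.var y := by
  match p with
  | [] =>
      rw [freeAt_nil] at h
      exact ⟨rfl, by simpa [mk0] using h⟩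
  | i :: q =>
      rw [freeAt_cons] at h
      refine absurd h.2 ?_
      have : child (mk0 s) i = (fun _ => none : T) := by
        funext r; simp [child, mk0]
      rw [this]; exact freeAt_none q

/-- a free variable has a pattern in the environment -/
lemma wf4_free_ne_none {x : ℕ} : ∀ (k : ℕ) (p : List ℕ) (Γ : Env4) (M : T),
    p.length ≤ k → WF4 Γ M → FreeAt x M p → Γ x ≠ none := by
  intro k
  induction k using Nat.strong_induction_on with
  | _ k IH =>
    intro p Γ M hk h hf
    cases wf4_unfold h with
    | base hr =>
        obtain ⟨Γ', N, hMc, hEq, hS⟩ := hr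
        subst hEq
        obtain ⟨q, hp, -, hq⟩ := freeAt_mk1_cases (by simp) hf
        subst hp
        have hlt : q.length < k := by simpa using hk
        have h' := IH q.length hlt q Γ' N le_rfl hS hq
        rcases hMc x with ⟨h1, h2⟩ | ⟨h1, h2⟩ | ⟨h1, h2⟩ | ⟨h1, h2⟩ <;>
          simp_all
    | vl z h1 h2 =>
        obtain ⟨-, hs⟩ := freeAt_mk0_cases hf
        injection hs with hs'
        subst hs'
        simp [h1]
    | vd z h1 h2 =>
        obtain ⟨-, hs⟩ := freeAt_mk0_cases hf
        injection hs with hs'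
        subst hs'
        simp [h1]
    | va z h1 h2 =>
        obtain ⟨-, hs⟩ := freeAt_mk0_cases hf
        injection hs with hs'
        subst hs'
        simp [h1]
    | app hsp hA hB =>
        rcases freeAt_mk2_cases hf with ⟨q, hp, hq⟩ | ⟨q, hp, hq⟩ <;> subst hp
        · have hlt : q.length < k := by simpa using hk
          have h' := IH q.length hlt q _ _ le_rfl (wf4_fold hA) hq
          rcases hsp x with ⟨h1, h2, h3⟩ | ⟨h1, h2, h3⟩ | ⟨h1, h2⟩ <;>
            [skip; simp_all; skip]
          · rw [← h2]; exact h'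
          · rcases h2 with ⟨h2, h3⟩ | ⟨h2, h3⟩ <;> simp_all
        · have hlt : q.length < k := by simpa using hk
          have h' := IH q.length hlt q _ _ le_rfl (wf4_fold hB) hq
          rcases hsp x with ⟨h1, h2, h3⟩ | ⟨h1, h2, h3⟩ | ⟨h1, h2⟩ <;>
            [skip; simp_all; skip]
          · rw [← h3]; exact h'
          · rcases h2 with ⟨h2, h3⟩ | ⟨h2, h3⟩ <;> simp_all
    | ll h1 hA =>
        rename_i z M₁
        obtain ⟨q, hp, hb, hq⟩ := freeAt_mk1_cases (by simp) hf
        subst hp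
        have hzx : ¬ x = z := by
          intro e; subst e; simp [bindsX] at hb
        have hlt : q.length < k := by simpa using hk
        have h' := IH q.length hlt q _ _ le_rfl (wf4_fold hA) hq
        simpa [Env4.upd, hzx] using h'
    | li1 h1 hA =>
        rename_i z M₁
        obtain ⟨q, hp, hb, hq⟩ := freeAt_mk1_cases (by simp) hf
        subst hp
        have hzx : ¬ x = z := by
          intro e; subst e; simp [bindsX] at hb
        have hlt : q.length < k := by simpa using hk
        have h' := IH q.length hlt q _ _ le_rfl (wf4_fold hA) hq
        simpa [Env4.upd, hzx] using h'
    | li2 h1 hA =>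
        rename_i z M₁
        obtain ⟨q, hp, hb, hq⟩ := freeAt_mk1_cases (by simp) hf
        subst hp
        have hzx : ¬ x = z := by
          intro e; subst e; simp [bindsX] at hb
        have hlt : q.length < k := by simpa using hk
        have h' := IH q.length hlt q _ _ le_rfl (wf4_fold hA) hq
        simpa [Env4.upd, hzx] using h'
    | lc h1 hA =>
        rename_i z M₁
        obtain ⟨q, hp, hb, hq⟩ := freeAt_mk1_cases (by simp) hf
        subst hp
        have hzx : ¬ x = z := by
          intro e; subst e; simp [bindsX] at hb
        have hlt : q.length < k := by simpa using hk
        have h' := IH q.length hlt q _ _ le_rfl (wf4_fold hA) hq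
        simpa [Env4.upd, hzx] using h'
    | mi hmi hA =>
        obtain ⟨q, hp, -, hq⟩ := freeAt_mk1_cases (by simp) hf
        subst hp
        have hlt : q.length < k := by simpa using hk
        have h' := IH q.length hlt q _ _ le_rfl (wf4_fold hA) hq
        rcases hmi x with ⟨h1, h2⟩ | ⟨h1, h2⟩ | ⟨h1, h2⟩ | ⟨h1, h2⟩ | ⟨h1, h2⟩ <;>
          simp_all

/-- coinductively shared variables are never rebound -/
lemma wf4_shared_nb {x : ℕ} : ∀ (k : ℕ) (p : List ℕ) (Γ : Env4) (M : T),
    p.length ≤ k → WF4 Γ M →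
    (Γ x = some Pat4.cm ∨ Γ x = some Pat4.am) → bindsX x (M p) = false := by
  intro k
  induction k using Nat.strong_induction_on with
  | _ k IH =>
    intro p Γ M hk h hsh
    cases wf4_unfold h with
    | base hr =>
        obtain ⟨Γ', N, hMc, hEq, hS⟩ := hr
        subst hEq
        match p with
        | [] => simp [mk1, bindsX]
        | 0 :: q =>
            have hlt : q.length < k := by simpa using hk
            have hsh' : Γ' x = some Pat4.cm ∨ Γ' x = some Pat4.am := by
              rcases hMc x with ⟨h1, h2⟩ | ⟨h1, h2⟩ | ⟨h1, h2⟩ | ⟨h1, h2⟩ <;>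
                rcases hsh with hh | hh <;> simp_all
            exact IH q.length hlt q Γ' N le_rfl hS hsh'
        | (i+1) :: q => simp [mk1, bindsX]
    | vl z h1 h2 =>
        match p with
        | [] => simp [mk0, bindsX]
        | i :: q => simp [mk0, bindsX]
    | vd z h1 h2 =>
        match p with
        | [] => simp [mk0, bindsX]
        | i :: q => simp [mk0, bindsX]
    | va z h1 h2 =>
        match p with
        | [] => simp [mk0, bindsX]
        | i :: q => simp [mk0, bindsX]
    | app hsp hA hB =>
        match p with
        | [] => simp [mk2, bindsX]
        | 0 :: q =>
            have hlt : q.length < k := by simpa using hk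
            have hsh' : _ := hsp x
            rcases hsh' with ⟨h1, h2, h3⟩ | ⟨h1, h2, h3⟩ | ⟨h1, h2⟩
            · exact IH q.length hlt q _ _ le_rfl (wf4_fold hA)
                (by rw [h2]; exact hsh)
            · simp_all
            · rcases hsh with hh | hh <;> simp_all
        | 1 :: q =>
            have hlt : q.length < k := by simpa using hk
            rcases hsp x with ⟨h1, h2, h3⟩ | ⟨h1, h2, h3⟩ | ⟨h1, h2⟩
            · exact IH q.length hlt q _ _ le_rfl (wf4_fold hB)
                (by rw [h3]; exact hsh)
            · simp_all
            · rcases hsh with hh | hh <;> simp_all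
        | (i+2) :: q => simp [mk2, bindsX]
    | ll h1 hA =>
        rename_i z M₁
        have hxz : ¬ x = z := by
          intro e; subst e; rcases hsh with hh | hh <;> simp_all
        have hzx : ¬ z = x := fun e => hxz (Eq.symm e)
        match p with
        | [] => simp [mk1, bindsX, hzx]
        | 0 :: q =>
            have hlt : q.length < k := by simpa using hk
            refine IH q.length hlt q _ _ le_rfl (wf4_fold hA) ?_
            simpa [Env4.upd, hxz] using hsh
        | (i+1) :: q => simp [mk1, bindsX]
    | li1 h1 hA =>
        rename_i z M₁
        have hxz : ¬ x = z := by
          intro e; subst e; rcases hsh with hh | hh <;> simp_all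
        have hzx : ¬ z = x := fun e => hxz (Eq.symm e)
        match p with
        | [] => simp [mk1, bindsX, hzx]
        | 0 :: q =>
            have hlt : q.length < k := by simpa using hk
            refine IH q.length hlt q _ _ le_rfl (wf4_fold hA) ?_
            simpa [Env4.upd, hxz] using hsh
        | (i+1) :: q => simp [mk1, bindsX]
    | li2 h1 hA =>
        rename_i z M₁
        have hxz : ¬ x = z := by
          intro e; subst e; rcases hsh with hh | hh <;> simp_all
        have hzx : ¬ z = x := fun e => hxz (Eq.symm e)
        match p with
        | [] => simp [mk1, bindsX, hzx]
        | 0 :: q =>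
            have hlt : q.length < k := by simpa using hk
            refine IH q.length hlt q _ _ le_rfl (wf4_fold hA) ?_
            simpa [Env4.upd, hxz] using hsh
        | (i+1) :: q => simp [mk1, bindsX]
    | lc h1 hA =>
        rename_i z M₁
        have hxz : ¬ x = z := by
          intro e; subst e; rcases hsh with hh | hh <;> simp_all
        have hzx : ¬ z = x := fun e => hxz (Eq.symm e)
        match p with
        | [] => simp [mk1, bindsX, hzx]
        | 0 :: q =>
            have hlt : q.length < k := by simpa using hk
            refine IH q.length hlt q _ _ le_rfl (wf4_fold hA) ?_
            simpa [Env4.upd, hxz] using hsh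
        | (i+1) :: q => simp [mk1, bindsX]
    | mi hmi hA =>
        match p with
        | [] => simp [mk1, bindsX]
        | 0 :: q =>
            have hlt : q.length < k := by simpa using hk
            refine IH q.length hlt q _ _ le_rfl (wf4_fold hA) ?_
            rcases hmi x with ⟨h1, h2⟩ | ⟨h1, h2⟩ | ⟨h1, h2⟩ | ⟨h1, h2⟩ | ⟨h1, h2⟩ <;>
              rcases hsh with hh | hh <;> simp_all
        | (i+1) :: q => simp [mk1, bindsX]

end WF4Pos

section WF4Pinv

/-- variables not marked ↑ or # have no free occurrence under a coinductive
box -/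
lemma wf4_pinv {x : ℕ} : ∀ (k : ℕ) (p : List ℕ) (Γ : Env4) (M : T),
    p.length ≤ k → WF4 Γ M → Γ x ≠ some Pat4.cm → Γ x ≠ some Pat4.am →
    ∀ q, M p = some Shape.cbox → ¬ FreeAt x M (p ++ 0 :: q) := by
  intro k
  induction k using Nat.strong_induction_on with
  | _ k IH =>
    intro p Γ M hk h hcm ham q hc hf
    cases wf4_unfold h with
    | base hr =>
        obtain ⟨Γ', N, hMc, hEq, hS⟩ := hr
        subst hEq
        have hnone : Γ' x = none := by
          rcases hMc x with ⟨h1, h2⟩ | ⟨h1, h2⟩ | ⟨h1, h2⟩ | ⟨h1, h2⟩ <;>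
            simp_all
        obtain ⟨r, hr', -, hfN⟩ := freeAt_mk1_cases (by simp) hf
        exact (wf4_free_ne_none r.length r Γ' N le_rfl hS hfN) hnone
    | vl z h1 h2 =>
        match p with
        | [] => simp [mk0] at hc
        | i :: p' => simp [mk0] at hc
    | vd z h1 h2 =>
        match p with
        | [] => simp [mk0] at hc
        | i :: p' => simp [mk0] at hc
    | va z h1 h2 =>
        match p with
        | [] => simp [mk0] at hc
        | i :: p' => simp [mk0] at hc
    | app hsp hA hB =>
        rename_i Γ₁ Γ₂ A B
        match p with
        | [] => simp [mk2] at hc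
        | 0 :: p' =>
            rw [List.cons_append, freeAt_cons, child_mk2_0] at hf
            have hc' : A p' = some Shape.cbox := hc
            have hΓ₁ : Γ₁ x ≠ some Pat4.cm ∧ Γ₁ x ≠ some Pat4.am := by
              rcases hsp x with ⟨h1, e1, e2⟩ | ⟨e0, e1, e2⟩ | ⟨e0, e12⟩
              · rw [e1]; exact ⟨hcm, ham⟩
              · rw [e1]; simp
              · rcases e12 with ⟨e1, e2⟩ | ⟨e1, e2⟩ <;> rcases e0 with e | e <;>
                  simp_all
            have hlt : p'.length < k := by simpa using hk
            exact IH p'.length hlt p' Γ₁ A le_rfl (wf4_fold hA)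
              hΓ₁.1 hΓ₁.2 q hc' hf.2
        | 1 :: p' =>
            rw [List.cons_append, freeAt_cons, child_mk2_1] at hf
            have hc' : B p' = some Shape.cbox := hc
            have hΓ₂ : Γ₂ x ≠ some Pat4.cm ∧ Γ₂ x ≠ some Pat4.am := by
              rcases hsp x with ⟨h1, e1, e2⟩ | ⟨e0, e1, e2⟩ | ⟨e0, e12⟩
              · rw [e2]; exact ⟨hcm, ham⟩
              · rw [e2]; simp
              · rcases e12 with ⟨e1, e2⟩ | ⟨e1, e2⟩ <;> rcases e0 with e | e <;>
                  simp_all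
            have hlt : p'.length < k := by simpa using hk
            exact IH p'.length hlt p' Γ₂ B le_rfl (wf4_fold hB)
              hΓ₂.1 hΓ₂.2 q hc' hf.2
        | (i+2) :: p' => simp [mk2] at hc
    | ll h1 hA =>
        rename_i z A
        match p with
        | [] => simp [mk1] at hc
        | 0 :: p' =>
            rw [List.cons_append, freeAt_cons, child_mk1_0] at hf
            by_cases hxz : x = z
            · subst hxz; simp [mk1, bindsX] at hf
            · have hc' : A p' = some Shape.cbox := hc
              have hlt : p'.length < k := by simpa using hk
              exact IH p'.length hlt p' _ A le_rfl (wf4_fold hA)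
                (by simp [Env4.upd, hxz]; exact hcm)
                (by simp [Env4.upd, hxz]; exact ham) q hc' hf.2
        | (i+1) :: p' => simp [mk1] at hc
    | li1 h1 hA =>
        rename_i z A
        match p with
        | [] => simp [mk1] at hc
        | 0 :: p' =>
            rw [List.cons_append, freeAt_cons, child_mk1_0] at hf
            by_cases hxz : x = z
            · subst hxz; simp [mk1, bindsX] at hf
            · have hc' : A p' = some Shape.cbox := hc
              have hlt : p'.length < k := by simpa using hk
              exact IH p'.length hlt p' _ A le_rfl (wf4_fold hA)
                (by simp [Env4.upd, hxz]; exact hcm)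
                (by simp [Env4.upd, hxz]; exact ham) q hc' hf.2
        | (i+1) :: p' => simp [mk1] at hc
    | li2 h1 hA =>
        rename_i z A
        match p with
        | [] => simp [mk1] at hc
        | 0 :: p' =>
            rw [List.cons_append, freeAt_cons, child_mk1_0] at hf
            by_cases hxz : x = z
            · subst hxz; simp [mk1, bindsX] at hf
            · have hc' : A p' = some Shape.cbox := hc
              have hlt : p'.length < k := by simpa using hk
              exact IH p'.length hlt p' _ A le_rfl (wf4_fold hA)
                (by simp [Env4.upd, hxz]; exact hcm)
                (by simp [Env4.upd, hxz]; exact ham) q hc' hf.2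
        | (i+1) :: p' => simp [mk1] at hc
    | lc h1 hA =>
        rename_i z A
        match p with
        | [] => simp [mk1] at hc
        | 0 :: p' =>
            rw [List.cons_append, freeAt_cons, child_mk1_0] at hf
            by_cases hxz : x = z
            · subst hxz; simp [mk1, bindsX] at hf
            · have hc' : A p' = some Shape.cbox := hc
              have hlt : p'.length < k := by simpa using hk
              exact IH p'.length hlt p' _ A le_rfl (wf4_fold hA)
                (by simp [Env4.upd, hxz]; exact hcm)
                (by simp [Env4.upd, hxz]; exact ham) q hc' hf.2
        | (i+1) :: p' => simp [mk1] at hc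
    | mi hmi hA =>
        rename_i Γ' A
        match p with
        | [] => simp [mk1] at hc
        | 0 :: p' =>
            rw [List.cons_append, freeAt_cons, child_mk1_0] at hf
            have hc' : A p' = some Shape.cbox := hc
            have hΓ' : Γ' x ≠ some Pat4.cm ∧ Γ' x ≠ some Pat4.am := by
              rcases hmi x with ⟨h1, h2⟩ | ⟨h1, h2⟩ | ⟨h1, h2⟩ | ⟨h1, h2⟩ | ⟨h1, h2⟩ <;>
                simp_all
            have hlt : p'.length < k := by simpa using hk
            exact IH p'.length hlt p' Γ' A le_rfl (wf4_fold hA)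
              hΓ'.1 hΓ'.2 q hc' hf.2
        | (i+1) :: p' => simp [mk1] at hc

end WF4Pinv

/-! ### Two-level substitution -/

section Subst2

/-- substitute `As` at free occurrences of `z` at depth 0, `Ao` at deeper
free occurrences -/
def subst2F (z : ℕ) (As Ao : T) : T → List ℕ → Option Shape
  | M, [] => if M [] = some (Shape.var z) then As [] else M []
  | M, i :: q =>
      if M [] = some (Shape.var z) then As (i :: q)
      else if bindsX z (M []) then M (i :: q)
      else if M [] = some Shape.cbox then substF z Ao (child M i) q
      else subst2F z As Ao (child M i) q
termination_by M p => p.length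

def subst2 (z : ℕ) (As Ao : T) (M : T) : T := fun p => subst2F z As Ao M p

lemma subst2F_nil (z : ℕ) (As Ao M : T) :
    subst2F z As Ao M [] = (if M [] = some (Shape.var z) then As [] else M []) := by
  simp [subst2F]

lemma subst2F_cons (z : ℕ) (As Ao M : T) (i : ℕ) (q : List ℕ) :
    subst2F z As Ao M (i :: q) =
      (if M [] = some (Shape.var z) then As (i :: q)
      else if bindsX z (M []) then M (i :: q)
      else if M [] = some Shape.cbox then substF z Ao (child M i) q
      else subst2F z As Ao (child M i) q) := by
  simp [subst2F]

lemma subst2_root_var {z : ℕ} {As Ao C : T} (h : C [] = some (Shape.var z)) :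
    subst2 z As Ao C = As := by
  funext p
  cases p with
  | nil => simp [subst2, subst2F_nil, h]
  | cons i q => simp [subst2, subst2F_cons, h]

lemma subst2_stop {z : ℕ} {As Ao C : T} (h : bindsX z (C []) = true) :
    subst2 z As Ao C = C := by
  have hv : C [] ≠ some (Shape.var z) := by
    intro e; rw [e] at h; simp [bindsX] at h
  funext p
  cases p with
  | nil => simp [subst2, subst2F_nil, hv]
  | cons i q => simp [subst2, subst2F_cons, hv, h]

lemma subst2_head {z : ℕ} {As Ao C : T} (hv : C [] ≠ some (Shape.var z)) :
    (subst2 z As Ao C) [] = C [] := by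
  simp [subst2, subst2F_nil, hv]

lemma subst2_step {z : ℕ} {As Ao C : T} (hv : C [] ≠ some (Shape.var z))
    (hb : bindsX z (C []) = false) (hc : C [] ≠ some Shape.cbox) (i : ℕ) :
    child (subst2 z As Ao C) i = subst2 z As Ao (child C i) := by
  funext q
  simp [child, subst2, subst2F_cons, hv, hb, hc]

lemma subst2_mk2 (z : ℕ) (As Ao M N : T) :
    subst2 z As Ao (mk2 M N) = mk2 (subst2 z As Ao M) (subst2 z As Ao N) := by
  have hv : (mk2 M N) [] ≠ some (Shape.var z) := by simp [mk2]
  have hb : bindsX z ((mk2 M N) []) = false := by simp [mk2, bindsX]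
  have hc : (mk2 M N) [] ≠ some Shape.cbox := by simp [mk2]
  funext p
  match p with
  | [] => simp [subst2, subst2F_nil, hv]; rfl
  | 0 :: q =>
      have := congrFun (subst2_step (As := As) (Ao := Ao) hv hb hc 0) q
      simpa [child, child_mk2_0, mk2] using this
  | 1 :: q =>
      have := congrFun (subst2_step (As := As) (Ao := Ao) hv hb hc 1) q
      simpa [child, child_mk2_1, mk2] using this
  | (i+2) :: q =>
      have := congrFun (subst2_step (As := As) (Ao := Ao) hv hb hc (i+2)) q
      simp only [child] at this
      rw [show (subst2 z As Ao (mk2 M N)) ((i+2) :: q) = subst2 z As Ao (child (mk2 M N) (i+2)) q from this]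
      have hnone : child (mk2 M N) (i+2) = (fun _ => none : T) := by
        funext r; rfl
      rw [hnone]
      have hn : ∀ r, subst2 z As Ao (fun _ => none : T) r = none := by
        intro r
        induction r with
        | nil => simp [subst2]; rw [subst2F_nil (M := (fun _ => none : T))]; simp
        | cons j r ih =>
            simp only [subst2] at ih ⊢
            erw [subst2F_cons]
            simp [bindsX]; exact ih
      rw [hn q]; rfl

lemma subst2_none (z : ℕ) (As Ao : T) :
    ∀ r, subst2 z As Ao (fun _ => none : T) r = none := by
  intro r
  induction r with
  | nil => simp [subst2]; rw [subst2F_nil (M := (fun _ => none : T))]; simp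
  | cons j r ih =>
      simp only [subst2] at ih ⊢
      erw [subst2F_cons]
      simp [bindsX]; exact ih

lemma subst2_mk1 (z : ℕ) (As Ao : T) {s : Shape} (M : T)
    (hv : ∀ y, s ≠ Shape.var y) (hb : bindsX z (some s) = false)
    (hc : s ≠ Shape.cbox) :
    subst2 z As Ao (mk1 s M) = mk1 s (subst2 z As Ao M) := by
  have hv' : (mk1 s M) [] ≠ some (Shape.var z) := by
    simp [mk1]; exact hv z
  have hc' : (mk1 s M) [] ≠ some Shape.cbox := by simp [mk1]; exact hc
  funext p
  match p with
  | [] => simp [subst2, subst2F_nil, hv']; rfl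
  | 0 :: q =>
      have := congrFun (subst2_step (As := As) (Ao := Ao) hv' (by simpa [mk1] using hb) hc' 0) q
      simpa [child, child_mk1_0, mk1] using this
  | (i+1) :: q =>
      have := congrFun (subst2_step (As := As) (Ao := Ao) hv' (by simpa [mk1] using hb) hc' (i+1)) q
      simp only [child] at this
      rw [show (subst2 z As Ao (mk1 s M)) ((i+1) :: q) = subst2 z As Ao (child (mk1 s M) (i+1)) q from this]
      have hnone : child (mk1 s M) (i+1) = (fun _ => none : T) := by
        funext r; rfl
      rw [hnone, subst2_none]; rfl

lemma subst2_cbox (z : ℕ) (As Ao : T) (M : T) :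
    subst2 z As Ao (mk1 Shape.cbox M) = mk1 Shape.cbox (subst z Ao M) := by
  funext p
  match p with
  | [] => simp [subst2, subst2F_nil, mk1]
  | 0 :: q =>
      simp only [subst2, mk1]
      rw [subst2F_cons]
      simp [mk1, bindsX]
      rw [show child (mk1 Shape.cbox M) 0 = M from child_mk1_0 _ _]
      rfl
  | (i+1) :: q =>
      simp only [subst2, mk1]
      rw [subst2F_cons]
      simp [mk1, bindsX]
      have hnone : child (mk1 Shape.cbox M) (i+1) = (fun _ => none : T) := by
        funext r; rfl
      rw [hnone]
      have := subst_none z Ao q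
      simp only [subst] at this
      rw [this]

lemma subst2_var_ne {z w : ℕ} (As Ao : T) (h : w ≠ z) :
    subst2 z As Ao (mk0 (Shape.var w)) = mk0 (Shape.var w) := by
  have hv : (mk0 (Shape.var w)) [] ≠ some (Shape.var z) := by
    simp [mk0]; exact h
  funext p
  match p with
  | [] => simp [subst2, subst2F_nil, hv]
  | i :: q =>
      have hb : bindsX z ((mk0 (Shape.var w)) []) = false := by simp [mk0, bindsX]
      have hc : (mk0 (Shape.var w)) [] ≠ some Shape.cbox := by simp [mk0]
      have := congrFun (subst2_step (As := As) (Ao := Ao) hv hb hc i) q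
      simp only [child] at this
      rw [show (subst2 z As Ao (mk0 (Shape.var w))) (i :: q) = subst2 z As Ao (child (mk0 (Shape.var w)) i) q from this]
      have hnone : child (mk0 (Shape.var w)) i = (fun _ => none : T) := by
        funext r; simp [child, mk0]
      rw [hnone, subst2_none]; rfl

end Subst2

/-! ### Shallowly finite terms -/

section Shallow

/-- finite above the coinductive boxes -/
inductive SF : T → Prop
  | var (x) : SF (mk0 (Shape.var x))
  | app {M N} : SF M → SF N → SF (mk2 M N)
  | labs (x) {M} : SF M → SF (mk1 (Shape.labs x) M)
  | iabs (x) {M} : SF M → SF (mk1 (Shape.iabs x) M)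
  | cabs (x) {M} : SF M → SF (mk1 (Shape.cabs x) M)
  | ibox {M} : SF M → SF (mk1 Shape.ibox M)
  | cbox (M) : SF (mk1 Shape.cbox M)

def SubAt (M : T) (p : List ℕ) : T := fun q => M (p ++ q)

/-- every coinductive box body is shallowly finite -/
def SFok (M : T) : Prop :=
  ∀ p, M p = some Shape.cbox → SF (SubAt M (p ++ [0]))

lemma subAt_nil (M : T) : SubAt M [] = M := by funext q; rfl

lemma subAt_cons (M : T) (i : ℕ) (p : List ℕ) :
    SubAt M (i :: p) = SubAt (child M i) p := by
  funext q; simp [SubAt, child]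

lemma sfok_child {M : T} (h : SFok M) (i : ℕ) : SFok (child M i) := by
  intro p hp
  have := h (i :: p) hp
  rwa [show (i :: p) ++ [0] = i :: (p ++ [0]) from rfl, subAt_cons] at this

lemma sf_subst {z : ℕ} {B C : T} (hC : SF C) (hB : SF B) :
    SF (subst z B C) := by
  induction hC with
  | var w =>
      by_cases hwz : w = z
      · subst hwz; rw [subst_var_eq]; exact hB
      · rw [subst_var_ne _ hwz]; exact SF.var w
  | app h1 h2 ih1 ih2 => rw [subst_mk2]; exact SF.app ih1 ih2
  | labs w h1 ih =>
      by_cases hwz : w = z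
      · subst hwz; rw [subst_stop (by simp [mk1, bindsX])]; exact SF.labs w h1
      · rw [subst_mk1 _ _ _ (by simp) (by simp [bindsX, hwz])]; exact SF.labs w ih
  | iabs w h1 ih =>
      by_cases hwz : w = z
      · subst hwz; rw [subst_stop (by simp [mk1, bindsX])]; exact SF.iabs w h1
      · rw [subst_mk1 _ _ _ (by simp) (by simp [bindsX, hwz])]; exact SF.iabs w ih
  | cabs w h1 ih =>
      by_cases hwz : w = z
      · subst hwz; rw [subst_stop (by simp [mk1, bindsX])]; exact SF.cabs w h1
      · rw [subst_mk1 _ _ _ (by simp) (by simp [bindsX, hwz])]; exact SF.cabs w ih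
  | ibox h1 ih =>
      rw [subst_mk1 _ _ _ (by simp) (by simp [bindsX])]; exact SF.ibox ih
  | cbox M =>
      rw [subst_mk1 _ _ _ (by simp) (by simp [bindsX])]; exact SF.cbox _

lemma sfok_subst {z : ℕ} {B C : T} (hC : SFok C) (hB : SFok B) (hBs : SF B) :
    SFok (subst z B C) := by
  intro p
  induction p generalizing C with
  | nil =>
      intro hp
      by_cases hv : C [] = some (Shape.var z)
      · rw [subst_root_var hv] at hp ⊢
        exact hB [] hp
      · have hhd : (subst z B C) [] = C [] := subst_head hv
        rw [hhd] at hp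
        have hb : bindsX z (C []) = false := by rw [hp]; rfl
        have hbody : SF (SubAt C [0]) := hC [] hp
        have : SubAt (subst z B C) [0] = subst z B (SubAt C [0]) := by
          rw [show ([0] : List ℕ) = 0 :: ([] : List ℕ) from rfl, subAt_cons,
            subAt_cons, subst_step hv hb, subAt_nil, subAt_nil]
        rw [show ([] : List ℕ) ++ [0] = [0] from rfl, this]
        exact sf_subst hbody hBs
  | cons i q ih =>
      intro hp
      by_cases hv : C [] = some (Shape.var z)
      · rw [subst_root_var hv] at hp ⊢
        exact hB _ hp
      · by_cases hb : bindsX z (C []) = true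
        · rw [subst_stop hb] at hp ⊢
          exact hC _ hp
        · have hb' : bindsX z (C []) = false := by simpa using hb
          have hstep := subst_step (A := B) hv hb' i
          have hp' : (subst z B (child C i)) q = some Shape.cbox := by
            rw [← hstep]; exact hp
          have := ih (C := child C i) (sfok_child hC i) hp'
          rw [show (i :: q) ++ [0] = i :: (q ++ [0]) from rfl, subAt_cons, hstep]
          exact this

lemma star_appL {M N P : T} (h : Star M N) : Star (mk2 M P) (mk2 N P) := by
  induction h with
  | refl => exact .refl
  | tail _ hstep ih =>
      obtain ⟨s, hs⟩ := hstep
      exact .tail ih ⟨s, Red.appL _ hs⟩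

lemma star_appR {M N P : T} (h : Star M N) : Star (mk2 P M) (mk2 P N) := by
  induction h with
  | refl => exact .refl
  | tail _ hstep ih =>
      obtain ⟨s, hs⟩ := hstep
      exact .tail ih ⟨s, Red.appR _ hs⟩

lemma star_labs {M N : T} (x : ℕ) (h : Star M N) :
    Star (mk1 (Shape.labs x) M) (mk1 (Shape.labs x) N) := by
  induction h with
  | refl => exact .refl
  | tail _ hstep ih =>
      obtain ⟨s, hs⟩ := hstep
      exact .tail ih ⟨s, Red.labs _ hs⟩

lemma star_iabs {M N : T} (x : ℕ) (h : Star M N) :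
    Star (mk1 (Shape.iabs x) M) (mk1 (Shape.iabs x) N) := by
  induction h with
  | refl => exact .refl
  | tail _ hstep ih =>
      obtain ⟨s, hs⟩ := hstep
      exact .tail ih ⟨s, Red.iabs _ hs⟩

lemma star_cabs {M N : T} (x : ℕ) (h : Star M N) :
    Star (mk1 (Shape.cabs x) M) (mk1 (Shape.cabs x) N) := by
  induction h with
  | refl => exact .refl
  | tail _ hstep ih =>
      obtain ⟨s, hs⟩ := hstep
      exact .tail ih ⟨s, Red.cabs _ hs⟩

lemma star_ibox {M N : T} (h : Star M N) :
    Star (mk1 Shape.ibox M) (mk1 Shape.ibox N) := by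
  induction h with
  | refl => exact .refl
  | tail _ hstep ih =>
      obtain ⟨s, hs⟩ := hstep
      exact .tail ih ⟨false :: s, Red.ibox hs⟩

/-- the shallow copies of the substituted term may be reduced in parallel -/
lemma starfix {z : ℕ} {Ao As : T} (hA : Star Ao As) :
    ∀ {m : T}, SF m → Star (subst z Ao m) (subst2 z As Ao m) := by
  intro m hm
  induction hm with
  | var w =>
      by_cases hwz : w = z
      · subst hwz
        rw [subst_var_eq, subst2_root_var (by simp [mk0])]
        exact hA
      · rw [subst_var_ne _ hwz, subst2_var_ne _ _ hwz]
        exact .refl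
  | app h1 h2 ih1 ih2 =>
      rw [subst_mk2, subst2_mk2]
      exact Relation.ReflTransGen.trans (star_appL ih1) (star_appR ih2)
  | labs w h1 ih =>
      by_cases hwz : w = z
      · subst hwz
        rw [subst_stop (by simp [mk1, bindsX]), subst2_stop (by simp [mk1, bindsX])]
        exact .refl
      · rw [subst_mk1 _ _ _ (by simp) (by simp [bindsX, hwz]),
          subst2_mk1 _ _ _ _ (by simp) (by simp [bindsX, hwz]) (by simp)]
        exact star_labs w ih
  | iabs w h1 ih =>
      by_cases hwz : w = z
      · subst hwz
        rw [subst_stop (by simp [mk1, bindsX]), subst2_stop (by simp [mk1, bindsX])]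
        exact .refl
      · rw [subst_mk1 _ _ _ (by simp) (by simp [bindsX, hwz]),
          subst2_mk1 _ _ _ _ (by simp) (by simp [bindsX, hwz]) (by simp)]
        exact star_iabs w ih
  | cabs w h1 ih =>
      by_cases hwz : w = z
      · subst hwz
        rw [subst_stop (by simp [mk1, bindsX]), subst2_stop (by simp [mk1, bindsX])]
        exact .refl
      · rw [subst_mk1 _ _ _ (by simp) (by simp [bindsX, hwz]),
          subst2_mk1 _ _ _ _ (by simp) (by simp [bindsX, hwz]) (by simp)]
        exact star_cabs w ih
  | ibox h1 ih =>
      rw [subst_mk1 _ _ _ (by simp) (by simp [bindsX]),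
        subst2_mk1 _ _ _ _ (by simp) (by simp [bindsX]) (by simp)]
      exact star_ibox ih
  | cbox c =>
      rw [subst_mk1 _ _ _ (by simp) (by simp [bindsX]), subst2_cbox]
      exact Relation.ReflTransGen.refl

end Shallow

section ShallowPres

lemma sf_mk2_parts {A B : T} (h : SF (mk2 A B)) : SF A ∧ SF B := by
  revert h
  generalize hM : (mk2 A B : T) = M0
  intro h
  cases h with
  | var x => exact absurd (congrFun hM []) (by simp [mk0, mk2])
  | app h1 h2 =>
      obtain ⟨e1, e2⟩ := mk2_inj hM
      subst e1; subst e2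
      exact ⟨h1, h2⟩
  | labs x h1 => exact absurd (congrFun hM []) (by simp [mk1, mk2])
  | iabs x h1 => exact absurd (congrFun hM []) (by simp [mk1, mk2])
  | cabs x h1 => exact absurd (congrFun hM []) (by simp [mk1, mk2])
  | ibox h1 => exact absurd (congrFun hM []) (by simp [mk1, mk2])
  | cbox c => exact absurd (congrFun hM []) (by simp [mk1, mk2])

lemma sf_mk1_body {s : Shape} {A : T} (h : SF (mk1 s A))
    (hvar : ∀ y, s ≠ Shape.var y) (happ : s ≠ Shape.app)
    (hcbox : s ≠ Shape.cbox) : SF A := by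
  revert h
  generalize hM : (mk1 s A : T) = M0
  intro h
  cases h with
  | var x =>
      have := congrFun hM []
      simp [mk0, mk1] at this
      exact absurd this (hvar x)
  | app h1 h2 =>
      have := congrFun hM []
      simp [mk2, mk1] at this
      exact absurd this happ
  | labs x h1 =>
      obtain ⟨e1, e2⟩ := mk1_inj hM
      subst e2; exact h1
  | iabs x h1 =>
      obtain ⟨e1, e2⟩ := mk1_inj hM
      subst e2; exact h1
  | cabs x h1 =>
      obtain ⟨e1, e2⟩ := mk1_inj hM
      subst e2; exact h1
  | ibox h1 =>
      obtain ⟨e1, e2⟩ := mk1_inj hM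
      subst e2; exact h1
  | cbox c =>
      obtain ⟨e1, e2⟩ := mk1_inj hM
      exact absurd e1 hcbox

lemma sfok_mk2 {A B : T} (hA : SFok A) (hB : SFok B) : SFok (mk2 A B) := by
  intro p hp
  match p with
  | [] => simp [mk2] at hp
  | 0 :: q =>
      rw [show (0 :: q) ++ [0] = 0 :: (q ++ [0]) from rfl, subAt_cons, child_mk2_0]
      exact hA q hp
  | 1 :: q =>
      rw [show (1 :: q) ++ [0] = 1 :: (q ++ [0]) from rfl, subAt_cons, child_mk2_1]
      exact hB q hp
  | (i+2) :: q => simp [mk2] at hp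

lemma sfok_mk1 {s : Shape} {A : T} (hs : s ≠ Shape.cbox) (hA : SFok A) :
    SFok (mk1 s A) := by
  intro p hp
  match p with
  | [] => rw [mk1_at] at hp; exact absurd (by injection hp) hs
  | 0 :: q =>
      rw [show (0 :: q) ++ [0] = 0 :: (q ++ [0]) from rfl, subAt_cons, child_mk1_0]
      exact hA q hp
  | (i+1) :: q => simp [mk1] at hp

lemma sfok_cbox {c : T} (hc : SF c) (hok : SFok c) : SFok (mk1 Shape.cbox c) := by
  intro p hp
  match p with
  | [] =>
      rw [show ([] : List ℕ) ++ [0] = 0 :: ([] : List ℕ) from rfl, subAt_cons,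
        child_mk1_0, subAt_nil]
      exact hc
  | 0 :: q =>
      rw [show (0 :: q) ++ [0] = 0 :: (q ++ [0]) from rfl, subAt_cons, child_mk1_0]
      exact hok q hp
  | (i+1) :: q => simp [mk1] at hp

lemma sfok_mk2_left {A B : T} (h : SFok (mk2 A B)) : SFok A := by
  intro p hp
  have := h (0 :: p) (by rw [show mk2 A B (0 :: p) = A p from rfl]; exact hp)
  rwa [show (0 :: p) ++ [0] = 0 :: (p ++ [0]) from rfl, subAt_cons, child_mk2_0] at this

lemma sfok_mk2_right {A B : T} (h : SFok (mk2 A B)) : SFok B := by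
  intro p hp
  have := h (1 :: p) (by rw [show mk2 A B (1 :: p) = B p from rfl]; exact hp)
  rwa [show (1 :: p) ++ [0] = 1 :: (p ++ [0]) from rfl, subAt_cons, child_mk2_1] at this

lemma sfok_mk1_body {s : Shape} {A : T} (h : SFok (mk1 s A)) : SFok A := by
  intro p hp
  have := h (0 :: p) (by rw [show mk1 s A (0 :: p) = A p from rfl]; exact hp)
  rwa [show (0 :: p) ++ [0] = 0 :: (p ++ [0]) from rfl, subAt_cons, child_mk1_0] at this

lemma red_sf {s : List Bool} {M N : T} (h : Red s M N)
    (hM : SF M) (hok : SFok M) : SF N ∧ SFok N := by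
  induction h with
  | base hb =>
      cases hb with
      | lin z M₀ N₀ =>
          obtain ⟨hF, hN₀⟩ := sf_mk2_parts hM
          have hM₀ : SF M₀ := sf_mk1_body hF (by simp) (by simp) (by simp)
          exact ⟨sf_subst hM₀ hN₀,
            sfok_subst (sfok_mk1_body (sfok_mk2_left hok)) (sfok_mk2_right hok) hN₀⟩
      | ind z M₀ N₀ =>
          obtain ⟨hF, hG⟩ := sf_mk2_parts hM
          have hM₀ : SF M₀ := sf_mk1_body hF (by simp) (by simp) (by simp)
          have hN₀ : SF N₀ := sf_mk1_body hG (by simp) (by simp) (by simp)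
          exact ⟨sf_subst hM₀ hN₀,
            sfok_subst (sfok_mk1_body (sfok_mk2_left hok))
              (sfok_mk1_body (sfok_mk2_right hok)) hN₀⟩
      | coi z M₀ N₀ =>
          obtain ⟨hF, hG⟩ := sf_mk2_parts hM
          have hM₀ : SF M₀ := sf_mk1_body hF (by simp) (by simp) (by simp)
          have hN₀ : SF N₀ := by
            have := hok [1] (by rw [show (mk2 (mk1 (Shape.cabs z) M₀) (mk1 Shape.cbox N₀)) [1] = (mk1 Shape.cbox N₀) [] from rfl]; rfl)
            rwa [show ([1] : List ℕ) ++ [0] = 1 :: (0 :: ([] : List ℕ)) from rfl,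
              subAt_cons, child_mk2_1, subAt_cons, child_mk1_0, subAt_nil] at this
          exact ⟨sf_subst hM₀ hN₀,
            sfok_subst (sfok_mk1_body (sfok_mk2_left hok))
              (sfok_mk1_body (sfok_mk2_right hok)) hN₀⟩
  | appL P h ih =>
      obtain ⟨h1, h2⟩ := sf_mk2_parts hM
      obtain ⟨h1', hok1'⟩ := ih h1 (sfok_mk2_left hok)
      exact ⟨SF.app h1' h2, sfok_mk2 hok1' (sfok_mk2_right hok)⟩
  | appR P h ih =>
      obtain ⟨h1, h2⟩ := sf_mk2_parts hM
      obtain ⟨h2', hok2'⟩ := ih h2 (sfok_mk2_right hok)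
      exact ⟨SF.app h1 h2', sfok_mk2 (sfok_mk2_left hok) hok2'⟩
  | labs z h ih =>
      obtain ⟨h1', hok1'⟩ := ih (sf_mk1_body hM (by simp) (by simp) (by simp))
        (sfok_mk1_body hok)
      exact ⟨SF.labs z h1', sfok_mk1 (by simp) hok1'⟩
  | iabs z h ih =>
      obtain ⟨h1', hok1'⟩ := ih (sf_mk1_body hM (by simp) (by simp) (by simp))
        (sfok_mk1_body hok)
      exact ⟨SF.iabs z h1', sfok_mk1 (by simp) hok1'⟩
  | cabs z h ih =>
      obtain ⟨h1', hok1'⟩ := ih (sf_mk1_body hM (by simp) (by simp) (by simp))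
        (sfok_mk1_body hok)
      exact ⟨SF.cabs z h1', sfok_mk1 (by simp) hok1'⟩
  | ibox h ih =>
      obtain ⟨h1', hok1'⟩ := ih (sf_mk1_body hM (by simp) (by simp) (by simp))
        (sfok_mk1_body hok)
      exact ⟨SF.ibox h1', sfok_mk1 (by simp) hok1'⟩
  | cbox h ih =>
      rename_i s' c c'
      have hc : SF c := by
        have := hok [] (by rw [mk1_at]
        )
        rwa [show ([] : List ℕ) ++ [0] = 0 :: ([] : List ℕ) from rfl, subAt_cons,
          child_mk1_0, subAt_nil] at this
      obtain ⟨h1', hok1'⟩ := ih hc (sfok_mk1_body hok)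
      exact ⟨SF.cbox _, sfok_cbox h1' hok1'⟩

lemma star_sf {M N : T} (h : Star M N) (hM : SF M) (hok : SFok M) :
    SF N ∧ SFok N := by
  induction h with
  | refl => exact ⟨hM, hok⟩
  | tail _ hstep ih =>
      obtain ⟨s, hs⟩ := hstep
      exact red_sf hs ih.1 ih.2

lemma wf4_sf {Γ : Env4} {M : T} (h : WF4Step (CoStep4 WF4) Γ M) : SF M := by
  induction h with
  | base hr =>
      obtain ⟨Γ', N, h1, h2, h3⟩ := hr
      rw [h2]; exact SF.cbox N
  | vl x h1 h2 => exact SF.var x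
  | vd x h1 h2 => exact SF.var x
  | va x h1 h2 => exact SF.var x
  | app h1 h2 h3 ih2 ih3 => exact SF.app ih2 ih3
  | ll h1 h2 ih => exact SF.labs _ ih
  | li1 h1 h2 ih => exact SF.iabs _ ih
  | li2 h1 h2 ih => exact SF.iabs _ ih
  | lc h1 h2 ih => exact SF.cabs _ ih
  | mi h1 h2 ih => exact SF.ibox ih

lemma wf4_sfok : ∀ (k : ℕ) (p : List ℕ) (Γ : Env4) (M : T),
    p.length ≤ k → WF4 Γ M → M p = some Shape.cbox →
    SF (SubAt M (p ++ [0])) := by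
  intro k
  induction k using Nat.strong_induction_on with
  | _ k IH =>
    intro p Γ M hk h hp
    cases wf4_unfold h with
    | base hr =>
        obtain ⟨Γ', N, hMc, hEq, hS⟩ := hr
        subst hEq
        match p with
        | [] =>
            rw [show ([] : List ℕ) ++ [0] = 0 :: ([] : List ℕ) from rfl,
              subAt_cons, child_mk1_0, subAt_nil]
            exact wf4_sf (wf4_unfold hS)
        | 0 :: q =>
            have hlt : q.length < k := by simpa using hk
            rw [show (0 :: q) ++ [0] = 0 :: (q ++ [0]) from rfl, subAt_cons,
              child_mk1_0]
            exact IH q.length hlt q Γ' N le_rfl hS hp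
        | (i+1) :: q => simp [mk1] at hp
    | vl z h1 h2 => exact absurd hp (by cases p <;> simp [mk0])
    | vd z h1 h2 => exact absurd hp (by cases p <;> simp [mk0])
    | va z h1 h2 => exact absurd hp (by cases p <;> simp [mk0])
    | app hsp hA hB =>
        match p with
        | [] => simp [mk2] at hp
        | 0 :: q =>
            have hlt : q.length < k := by simpa using hk
            rw [show (0 :: q) ++ [0] = 0 :: (q ++ [0]) from rfl, subAt_cons,
              child_mk2_0]
            exact IH q.length hlt q _ _ le_rfl (wf4_fold hA) hp
        | 1 :: q =>
            have hlt : q.length < k := by simpa using hk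
            rw [show (1 :: q) ++ [0] = 1 :: (q ++ [0]) from rfl, subAt_cons,
              child_mk2_1]
            exact IH q.length hlt q _ _ le_rfl (wf4_fold hB) hp
        | (i+2) :: q => simp [mk2] at hp
    | ll h1 hA =>
        match p with
        | [] => simp [mk1] at hp
        | 0 :: q =>
            have hlt : q.length < k := by simpa using hk
            rw [show (0 :: q) ++ [0] = 0 :: (q ++ [0]) from rfl, subAt_cons,
              child_mk1_0]
            exact IH q.length hlt q _ _ le_rfl (wf4_fold hA) hp
        | (i+1) :: q => simp [mk1] at hp
    | li1 h1 hA =>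
        match p with
        | [] => simp [mk1] at hp
        | 0 :: q =>
            have hlt : q.length < k := by simpa using hk
            rw [show (0 :: q) ++ [0] = 0 :: (q ++ [0]) from rfl, subAt_cons,
              child_mk1_0]
            exact IH q.length hlt q _ _ le_rfl (wf4_fold hA) hp
        | (i+1) :: q => simp [mk1] at hp
    | li2 h1 hA =>
        match p with
        | [] => simp [mk1] at hp
        | 0 :: q =>
            have hlt : q.length < k := by simpa using hk
            rw [show (0 :: q) ++ [0] = 0 :: (q ++ [0]) from rfl, subAt_cons,
              child_mk1_0]
            exact IH q.length hlt q _ _ le_rfl (wf4_fold hA) hp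
        | (i+1) :: q => simp [mk1] at hp
    | lc h1 hA =>
        match p with
        | [] => simp [mk1] at hp
        | 0 :: q =>
            have hlt : q.length < k := by simpa using hk
            rw [show (0 :: q) ++ [0] = 0 :: (q ++ [0]) from rfl, subAt_cons,
              child_mk1_0]
            exact IH q.length hlt q _ _ le_rfl (wf4_fold hA) hp
        | (i+1) :: q => simp [mk1] at hp
    | mi hmi hA =>
        match p with
        | [] => simp [mk1] at hp
        | 0 :: q =>
            have hlt : q.length < k := by simpa using hk
            rw [show (0 :: q) ++ [0] = 0 :: (q ++ [0]) from rfl, subAt_cons,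
              child_mk1_0]
            exact IH q.length hlt q _ _ le_rfl (wf4_fold hA) hp
        | (i+1) :: q => simp [mk1] at hp

end ShallowPres

section CmShallow

/-- a ↑-variable is free only under coinductive boxes -/
lemma wf4_cm_under_cbox {x : ℕ} : ∀ (k : ℕ) (p : List ℕ) (Γ : Env4) (M : T),
    p.length ≤ k → WF4 Γ M → Γ x = some Pat4.cm → FreeAt x M p →
    ∃ p₁ p₂, p = p₁ ++ 0 :: p₂ ∧ M p₁ = some Shape.cbox := by
  intro k
  induction k using Nat.strong_induction_on with
  | _ k IH =>
    intro p Γ M hk h hcm hf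
    cases wf4_unfold h with
    | base hr =>
        obtain ⟨Γ', N, hMc, hEq, hS⟩ := hr
        subst hEq
        obtain ⟨q, hp, -, hq⟩ := freeAt_mk1_cases (by simp) hf
        exact ⟨[], q, hp, rfl⟩
    | vl z h1 h2 =>
        obtain ⟨-, hs⟩ := freeAt_mk0_cases hf
        injection hs with hs'; subst hs'; simp_all
    | vd z h1 h2 =>
        obtain ⟨-, hs⟩ := freeAt_mk0_cases hf
        injection hs with hs'; subst hs'; simp_all
    | va z h1 h2 =>
        obtain ⟨-, hs⟩ := freeAt_mk0_cases hf
        injection hs with hs'; subst hs'; simp_all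
    | app hsp hA hB =>
        rename_i Γ₁ Γ₂ A B
        rcases freeAt_mk2_cases hf with ⟨q, hp, hq⟩ | ⟨q, hp, hq⟩ <;> subst hp
        · have hΓ₁ : Γ₁ x = some Pat4.cm := by
            rcases hsp x with ⟨h1, e1, e2⟩ | ⟨e0, e1, e2⟩ | ⟨e0, e12⟩
            · rw [e1, hcm]
            · simp_all
            · rcases e12 with ⟨e1, e2⟩ | ⟨e1, e2⟩ <;> rcases e0 with e | e <;>
                simp_all
          have hlt : q.length < k := by simpa using hk
          obtain ⟨p₁, p₂, hq', hc⟩ := IH q.length hlt q _ _ le_rfl (wf4_fold hA) hΓ₁ hq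
          exact ⟨0 :: p₁, p₂, by rw [hq']; rfl, hc⟩
        · have hΓ₂ : Γ₂ x = some Pat4.cm := by
            rcases hsp x with ⟨h1, e1, e2⟩ | ⟨e0, e1, e2⟩ | ⟨e0, e12⟩
            · rw [e2, hcm]
            · simp_all
            · rcases e12 with ⟨e1, e2⟩ | ⟨e1, e2⟩ <;> rcases e0 with e | e <;>
                simp_all
          have hlt : q.length < k := by simpa using hk
          obtain ⟨p₁, p₂, hq', hc⟩ := IH q.length hlt q _ _ le_rfl (wf4_fold hB) hΓ₂ hq
          exact ⟨1 :: p₁, p₂, by rw [hq']; rfl, hc⟩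
    | ll h1 hA =>
        rename_i z A
        obtain ⟨q, hp, hb, hq⟩ := freeAt_mk1_cases (by simp) hf
        subst hp
        have hxz : ¬ x = z := by
          intro e; subst e; simp [bindsX] at hb
        have hlt : q.length < k := by simpa using hk
        obtain ⟨p₁, p₂, hq', hc⟩ := IH q.length hlt q _ _ le_rfl (wf4_fold hA)
          (by simpa [Env4.upd, hxz] using hcm) hq
        exact ⟨0 :: p₁, p₂, by rw [hq']; rfl, hc⟩
    | li1 h1 hA =>
        rename_i z A
        obtain ⟨q, hp, hb, hq⟩ := freeAt_mk1_cases (by simp) hf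
        subst hp
        have hxz : ¬ x = z := by
          intro e; subst e; simp [bindsX] at hb
        have hlt : q.length < k := by simpa using hk
        obtain ⟨p₁, p₂, hq', hc⟩ := IH q.length hlt q _ _ le_rfl (wf4_fold hA)
          (by simpa [Env4.upd, hxz] using hcm) hq
        exact ⟨0 :: p₁, p₂, by rw [hq']; rfl, hc⟩
    | li2 h1 hA =>
        rename_i z A
        obtain ⟨q, hp, hb, hq⟩ := freeAt_mk1_cases (by simp) hf
        subst hp
        have hxz : ¬ x = z := by
          intro e; subst e; simp [bindsX] at hb
        have hlt : q.length < k := by simpa using hk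
        obtain ⟨p₁, p₂, hq', hc⟩ := IH q.length hlt q _ _ le_rfl (wf4_fold hA)
          (by simpa [Env4.upd, hxz] using hcm) hq
        exact ⟨0 :: p₁, p₂, by rw [hq']; rfl, hc⟩
    | lc h1 hA =>
        rename_i z A
        obtain ⟨q, hp, hb, hq⟩ := freeAt_mk1_cases (by simp) hf
        subst hp
        have hxz : ¬ x = z := by
          intro e; subst e; simp [bindsX] at hb
        have hlt : q.length < k := by simpa using hk
        obtain ⟨p₁, p₂, hq', hc⟩ := IH q.length hlt q _ _ le_rfl (wf4_fold hA)
          (by simpa [Env4.upd, hxz] using hcm) hq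
        exact ⟨0 :: p₁, p₂, by rw [hq']; rfl, hc⟩
    | mi hmi hA =>
        rename_i Γ' A
        obtain ⟨q, hp, hb, hq⟩ := freeAt_mk1_cases (by simp) hf
        subst hp
        have hΓ' : Γ' x = some Pat4.cm := by
          rcases hmi x with ⟨h1, h2⟩ | ⟨h1, h2⟩ | ⟨h1, h2⟩ | ⟨h1, h2⟩ | ⟨h1, h2⟩ <;>
            simp_all
        have hlt : q.length < k := by simpa using hk
        obtain ⟨p₁, p₂, hq', hc⟩ := IH q.length hlt q _ _ le_rfl (wf4_fold hA) hΓ' hq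
        exact ⟨0 :: p₁, p₂, by rw [hq']; rfl, hc⟩

/-- if `z` is free only under coinductive boxes, the two-level substitution
coincides with the ordinary one -/
lemma subst2_eq_subst {z : ℕ} {As Ao : T} :
    ∀ (p : List ℕ) (C : T),
      (∀ r, FreeAt z C r → ∃ p₁ p₂, r = p₁ ++ 0 :: p₂ ∧ C p₁ = some Shape.cbox) →
      (subst2 z As Ao C) p = (subst z Ao C) p := by
  intro p
  induction p with
  | nil =>
      intro C hC
      have hv : C [] ≠ some (Shape.var z) := by
        intro e
        obtain ⟨p₁, p₂, hr, -⟩ := hC [] (freeAt_nil.2 e)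
        exact absurd hr.symm (by simp)
      simp [subst2, subst, subst2F_nil, substF_nil, hv]
  | cons i q ih =>
      intro C hC
      have hv : C [] ≠ some (Shape.var z) := by
        intro e
        obtain ⟨p₁, p₂, hr, -⟩ := hC [] (freeAt_nil.2 e)
        exact absurd hr.symm (by simp)
      by_cases hb : bindsX z (C []) = true
      · simp [subst2, subst, subst2F_cons, substF_cons, hv, hb]
      · have hb' : bindsX z (C []) = false := by simpa using hb
        by_cases hcb : C [] = some Shape.cbox
        · simp [subst2, subst, subst2F_cons, substF_cons, hv, hb', hcb]
        · have hC' : ∀ r, FreeAt z (child C i) r →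
              ∃ p₁ p₂, r = p₁ ++ 0 :: p₂ ∧ (child C i) p₁ = some Shape.cbox := by
            intro r hr
            obtain ⟨p₁, p₂, hr', hc⟩ := hC (i :: r) (freeAt_cons.2 ⟨hb', hr⟩)
            match p₁, hr' with
            | [], hr' =>
                exfalso
                apply hcb
                simpa using hc
            | j :: p₁', hr' =>
                rw [List.cons_append] at hr'
                injection hr' with e1 e2
                subst e1
                exact ⟨p₁', p₂, e2, hc⟩
          have := ih (child C i) hC'
          simp only [subst2, subst] at this ⊢
          rw [subst2F_cons, substF_cons]
          simp [hv, hb', hcb]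
          exact this

end CmShallow

section SubstCoi

/-- candidate set for substitution of coinductively shared variables -/
def SCoi : Bool → T → T → Prop := fun b P Q =>
  IRSys b P Q ∨ (b = false ∧ ∃ z Ao As B M M',
    P = subst2 z As Ao M ∧ Q = subst z B M' ∧ IRSys false M M' ∧
    Star Ao As ∧ IRSys false As B ∧
    (∀ y, y = z ∨ Free y Ao → NB y M) ∧ SFok M)

lemma lift_SCoi : ∀ {b M N}, Ilv b M N → IRInd (IRCo SCoi) b M N :=
  fun h => IRInd_mono (fun _ _ _ hr =>
    IRCo_mono (fun _ _ _ hs => Or.inl hs) hr) h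

lemma subst_coi_aux : ∀ {b M M'}, Ilv b M M' → b = false →
    ∀ z Ao As B, Star Ao As → IRSys false As B →
    (∀ y, y = z ∨ Free y Ao → NB y M) → SFok M →
    IRInd (IRCo SCoi) false (subst2 z As Ao M) (subst z B M') := by
  intro b M M' h
  induction h with
  | base hr => intro hb; rw [hb] at hr; exact absurd hr.1 (by simp)
  | varr w =>
      intro _ z Ao As B hSt hAsB hH hok
      by_cases hwz : w = z
      · subst hwz
        rw [subst2_root_var (by simp [mk0]), subst_var_eq]
        exact lift_SCoi (irsys_unfold hAsB)
      · rw [subst2_var_ne _ _ hwz, subst_var_ne _ hwz]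
        exact IRInd.varr w
  | app h1 h2 ih1 ih2 =>
      intro _ z Ao As B hSt hAsB hH hok
      rw [subst2_mk2, subst_mk2]
      exact IRInd.app
        (ih1 rfl z Ao As B hSt hAsB (fun y hy => nb_mk2_left (hH y hy))
          (sfok_mk2_left hok))
        (ih2 rfl z Ao As B hSt hAsB (fun y hy => nb_mk2_right (hH y hy))
          (sfok_mk2_right hok))
  | labs w h1 ih =>
      intro _ z Ao As B hSt hAsB hH hok
      have hwz : w ≠ z := by
        intro e; subst e
        have := hH w (Or.inl rfl) []
        simp [mk1, bindsX] at this
      rw [subst2_mk1 _ _ _ _ (by simp) (by simp [bindsX, hwz]) (by simp),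
        subst_mk1 _ _ _ (by simp) (by simp [bindsX, hwz])]
      exact IRInd.labs w (ih rfl z Ao As B hSt hAsB
        (fun y hy => nb_mk1_body (hH y hy)) (sfok_mk1_body hok))
  | iabs w h1 ih =>
      intro _ z Ao As B hSt hAsB hH hok
      have hwz : w ≠ z := by
        intro e; subst e
        have := hH w (Or.inl rfl) []
        simp [mk1, bindsX] at this
      rw [subst2_mk1 _ _ _ _ (by simp) (by simp [bindsX, hwz]) (by simp),
        subst_mk1 _ _ _ (by simp) (by simp [bindsX, hwz])]
      exact IRInd.iabs w (ih rfl z Ao As B hSt hAsB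
        (fun y hy => nb_mk1_body (hH y hy)) (sfok_mk1_body hok))
  | cabs w h1 ih =>
      intro _ z Ao As B hSt hAsB hH hok
      have hwz : w ≠ z := by
        intro e; subst e
        have := hH w (Or.inl rfl) []
        simp [mk1, bindsX] at this
      rw [subst2_mk1 _ _ _ _ (by simp) (by simp [bindsX, hwz]) (by simp),
        subst_mk1 _ _ _ (by simp) (by simp [bindsX, hwz])]
      exact IRInd.cabs w (ih rfl z Ao As B hSt hAsB
        (fun y hy => nb_mk1_body (hH y hy)) (sfok_mk1_body hok))
  | ibox h1 ih =>
      intro _ z Ao As B hSt hAsB hH hok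
      rw [subst2_mk1 _ _ _ _ (by simp) (by simp [bindsX]) (by simp),
        subst_mk1 _ _ _ (by simp) (by simp [bindsX])]
      exact IRInd.ibox (ih rfl z Ao As B hSt hAsB
        (fun y hy => nb_mk1_body (hH y hy)) (sfok_mk1_body hok))
  | cbox h1 ihu =>
      rename_i c c'
      intro _ z Ao As B hSt hAsB hH hok
      obtain ⟨mid, hstar, hmid⟩ := ilv_true_inv h1
      have hSFc : SF c := by
        have h0 := hok [] (by rw [mk1_at])
        rwa [show ([] : List ℕ) ++ [0] = 0 :: ([] : List ℕ) from rfl, subAt_cons,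
          child_mk1_0, subAt_nil] at h0
      have hSFokc : SFok c := sfok_mk1_body hok
      obtain ⟨hSFmid, hSFokmid⟩ := star_sf hstar hSFc hSFokc
      have hHc : ∀ y, y = z ∨ Free y Ao → NB y c :=
        fun y hy => nb_mk1_body (hH y hy)
      rw [subst2_cbox, subst_mk1 _ _ _ (by simp) (by simp [bindsX])]
      refine IRInd.cbox (IRInd.base ⟨rfl, subst2 z As Ao mid, ?_, ?_⟩)
      · exact Relation.ReflTransGen.trans (comm_star hstar hHc)
          (starfix hSt hSFmid)
      · exact Or.inr ⟨rfl, z, Ao, As, B, mid, c', rfl, rfl, hmid, hSt, hAsB,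
          (fun y hy => nb_star hstar (hHc y hy)), hSFokmid⟩

lemma SCoi_closed : ∀ b P Q, SCoi b P Q → IRInd (IRCo SCoi) b P Q := by
  rintro b P Q (h | ⟨hb, z, Ao, As, B, M, M', rfl, rfl, hMM, hSt, hAsB, hH, hok⟩)
  · exact lift_SCoi (irsys_unfold h)
  · subst hb
    exact subst_coi_aux (irsys_unfold hMM) rfl z Ao As B hSt hAsB hH hok

lemma subst_coi {z : ℕ} {Ao As B M M' : T} (hMM : IRSys false M M')
    (hSt : Star Ao As) (hAsB : IRSys false As B)
    (hH : ∀ y, y = z ∨ Free y Ao → NB y M) (hok : SFok M) :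
    IRSys false (subst2 z As Ao M) (subst z B M') :=
  ⟨SCoi, SCoi_closed, Or.inr ⟨rfl, z, Ao, As, B, M, M', rfl, rfl, hMM, hSt,
    hAsB, hH, hok⟩⟩

end SubstCoi

/-! ### Noninterference, main induction -/

section Main

lemma noninterference_aux : ∀ {s : List Bool} {M N : T}, Red s M N →
    s.count true = 0 → ∀ (Δ : Env4) (L : T), WF4 Δ M → Ilv false M L →
    ∃ P, Ilv false N P ∧ Red s L P := by
  intro s M N h
  induction h with
  | base hb =>
      intro hcnt Δ L hwf hnext
      cases hb with
      | lin z M₀ N₀ =>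
          obtain ⟨Γ₁, Γ₂, hsp, hwf1, hwf2⟩ := wf4_inv_app hwf
          obtain ⟨hz, hwfM₀⟩ := wf4_inv_labs hwf1
          obtain ⟨F', L₂, hL, hF, hN₀⟩ := ilv_inv_app hnext
          obtain ⟨M₀', hF', hM₀⟩ := ilv_inv_labs hF
          subst hL; subst hF'
          have hPinv : Pinv z M₀ := by
            intro p q hc hf
            exact wf4_pinv p.length p _ M₀ le_rfl hwfM₀
              (by simp [Env4.upd]) (by simp [Env4.upd]) q hc hf
          exact ⟨subst z L₂ M₀',
            irsys_unfold (subst_pinv (irsys_fold hM₀) (irsys_fold hN₀) hPinv),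
            Red.base (Basic.lin z M₀' L₂)⟩
      | ind z M₀ N₀ =>
          obtain ⟨Γ₁, Γ₂, hsp, hwf1, hwf2⟩ := wf4_inv_app hwf
          obtain ⟨hz, hdisj⟩ := wf4_inv_iabs hwf1
          obtain ⟨F', G', hL, hF, hG⟩ := ilv_inv_app hnext
          obtain ⟨M₀', hF', hM₀⟩ := ilv_inv_iabs hF
          obtain ⟨L₂, hG', hN₀⟩ := ilv_inv_ibox hG
          subst hL; subst hF'; subst hG'
          have hPinv : Pinv z M₀ := by
            rcases hdisj with hwfM₀ | hwfM₀ <;>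
            · intro p q hc hf
              exact wf4_pinv p.length p _ M₀ le_rfl hwfM₀
                (by simp [Env4.upd]) (by simp [Env4.upd]) q hc hf
          exact ⟨subst z L₂ M₀',
            irsys_unfold (subst_pinv (irsys_fold hM₀) (irsys_fold hN₀) hPinv),
            Red.base (Basic.ind z M₀' L₂)⟩
      | coi z M₀ N₀ =>
          obtain ⟨Γ₁, Γ₂, hsp, hwf1, hwf2⟩ := wf4_inv_app hwf
          obtain ⟨hz, hwfM₀⟩ := wf4_inv_cabs hwf1
          obtain ⟨Γ₂', hMc, hwfN₀⟩ := wf4_inv_cbox hwf2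
          obtain ⟨F', G', hL, hF, hG⟩ := ilv_inv_app hnext
          obtain ⟨M₀', hF', hM₀⟩ := ilv_inv_cabs hF
          obtain ⟨N₀'', hG', hN₀t⟩ := ilv_inv_cbox hG
          subst hL; subst hF'; subst hG'
          obtain ⟨mid, hstar, hmidN⟩ := ilv_true_inv hN₀t
          have hH : ∀ y, y = z ∨ Free y N₀ → NB y M₀ := by
            intro y hy p
            apply wf4_shared_nb p.length p (Γ₁.upd z (some Pat4.cm)) M₀ le_rfl hwfM₀
            rcases hy with rfl | hfree
            · left; simp [Env4.upd]
            · obtain ⟨r', hfN⟩ := hfree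
              have hne : Γ₂' y ≠ none :=
                wf4_free_ne_none r'.length r' _ _ le_rfl hwfN₀ hfN
              have hΓ₂ : Γ₂ y = some Pat4.cm ∨ Γ₂ y = some Pat4.am := by
                rcases hMc y with ⟨h1, h2⟩ | ⟨h1, h2⟩ | ⟨h1, h2⟩ | ⟨h1, h2⟩ <;>
                  simp_all
              have hΓ₁ : Γ₁ y = some Pat4.cm ∨ Γ₁ y = some Pat4.am := by
                rcases hsp y with ⟨h1, e1, e2⟩ | ⟨e0, e1, e2⟩ | ⟨e0, e12⟩
                · rw [e1, ← e2]; exact hΓ₂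
                · simp_all
                · rcases e12 with ⟨e1, e2⟩ | ⟨e1, e2⟩ <;> rcases e0 with e | e <;>
                    simp_all
              by_cases hyz : y = z
              · left; simp [Env4.upd, hyz]
              · simpa [Env4.upd, hyz] using hΓ₁
          have hok : SFok M₀ :=
            fun p hp => wf4_sfok p.length p _ M₀ le_rfl hwfM₀ hp
          have hshallow : ∀ r, FreeAt z M₀ r →
              ∃ p₁ p₂, r = p₁ ++ 0 :: p₂ ∧ M₀ p₁ = some Shape.cbox :=
            fun r hr => wf4_cm_under_cbox r.length r _ M₀ le_rfl hwfM₀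
              (by simp [Env4.upd]) hr
          have heq : subst z N₀ M₀ = subst2 z mid N₀ M₀ := by
            funext p; exact (subst2_eq_subst p M₀ hshallow).symm
          refine ⟨subst z N₀'' M₀', ?_, Red.base (Basic.coi z M₀' N₀'')⟩
          rw [heq]
          exact irsys_unfold (subst_coi (irsys_fold hM₀) hstar hmidN hH hok)
  | appL P₀ h ih =>
      intro hcnt Δ L hwf hnext
      obtain ⟨Γ₁, Γ₂, hsp, h1, h2⟩ := wf4_inv_app hwf
      obtain ⟨L₁, L₂, hL, hl1, hl2⟩ := ilv_inv_app hnext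
      subst hL
      obtain ⟨P₁, hP₁, hred⟩ := ih hcnt Γ₁ L₁ h1 hl1
      exact ⟨mk2 P₁ L₂, IRInd.app hP₁ hl2, Red.appL _ hred⟩
  | appR P₀ h ih =>
      intro hcnt Δ L hwf hnext
      obtain ⟨Γ₁, Γ₂, hsp, h1, h2⟩ := wf4_inv_app hwf
      obtain ⟨L₁, L₂, hL, hl1, hl2⟩ := ilv_inv_app hnext
      subst hL
      obtain ⟨P₂, hP₂, hred⟩ := ih hcnt Γ₂ L₂ h2 hl2
      exact ⟨mk2 L₁ P₂, IRInd.app hl1 hP₂, Red.appR _ hred⟩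
  | labs z h ih =>
      intro hcnt Δ L hwf hnext
      obtain ⟨hz, h1⟩ := wf4_inv_labs hwf
      obtain ⟨L₁, hL, hl1⟩ := ilv_inv_labs hnext
      subst hL
      obtain ⟨P₁, hP₁, hred⟩ := ih hcnt _ L₁ h1 hl1
      exact ⟨mk1 (Shape.labs z) P₁, IRInd.labs z hP₁, Red.labs z hred⟩
  | iabs z h ih =>
      intro hcnt Δ L hwf hnext
      obtain ⟨hz, hdisj⟩ := wf4_inv_iabs hwf
      obtain ⟨L₁, hL, hl1⟩ := ilv_inv_iabs hnext
      subst hL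
      rcases hdisj with h1 | h1
      · obtain ⟨P₁, hP₁, hred⟩ := ih hcnt _ L₁ h1 hl1
        exact ⟨mk1 (Shape.iabs z) P₁, IRInd.iabs z hP₁, Red.iabs z hred⟩
      · obtain ⟨P₁, hP₁, hred⟩ := ih hcnt _ L₁ h1 hl1
        exact ⟨mk1 (Shape.iabs z) P₁, IRInd.iabs z hP₁, Red.iabs z hred⟩
  | cabs z h ih =>
      intro hcnt Δ L hwf hnext
      obtain ⟨hz, h1⟩ := wf4_inv_cabs hwf
      obtain ⟨L₁, hL, hl1⟩ := ilv_inv_cabs hnext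
      subst hL
      obtain ⟨P₁, hP₁, hred⟩ := ih hcnt _ L₁ h1 hl1
      exact ⟨mk1 (Shape.cabs z) P₁, IRInd.cabs z hP₁, Red.cabs z hred⟩
  | ibox h ih =>
      intro hcnt Δ L hwf hnext
      obtain ⟨Γ', hmi, h1⟩ := wf4_inv_ibox hwf
      obtain ⟨L₁, hL, hl1⟩ := ilv_inv_ibox hnext
      subst hL
      obtain ⟨P₁, hP₁, hred⟩ := ih (by simpa using hcnt) Γ' L₁ h1 hl1
      exact ⟨mk1 Shape.ibox P₁, IRInd.ibox hP₁, Red.ibox hred⟩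
  | cbox h ih =>
      intro hcnt
      simp at hcnt

end Main

/-- Noninterference: if `M` reduces at depth 0 to `N` and `M ⤳ L`, then there
is `P` with `N ⤳ P` and `L` reducing at depth 0 to `P`. -/
theorem noninterference (Γ : Env4) (M N L : T)
    (h : WF4 Γ M) (hr : RedAt 0 M N) (hn : Next M L) :
    ∃ P : T, Next N P ∧ RedAt 0 L P := by
  obtain ⟨s, hcnt, hred⟩ := hr
  have hnext : Ilv false M L := irsys_unfold hn
  obtain ⟨P, hNP, hred'⟩ := noninterference_aux hred hcnt Γ L h hnext
  exact ⟨P, irsys_fold hNP, ⟨s, hcnt, hred'⟩⟩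

end LLInf
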